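/- arXiv:1605.06263 — 5 statements merged into one kernel-verified Lean document; each statement's English description precedes it below -/
import Mathlib

section
/- For every m ≥ 1 there exists a function B_m : (ℕ₊ → ℕ₊) → ℕ, monotone in the pointwise order on non-decreasing functions, such that every f-bounded antichain α₁, ..., α_t in ℕ^m has length t ≤ B_m(f), for every non-decreasing f : ℕ₊ → ℕ₊. -/
open Set

/-- The set of lengths of `f`-bounded bad sequences in `ℕ^m`. -/
def badSet (m : ℕ) (f : ℕ → ℕ) : Set ℕ :=
  {t | ∃ α : Fin t → (Fin m → ℕ),
      (∀ i j : Fin t, i < j → ¬ α i ≤ α j) ∧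
      (∀ i : Fin t, (∑ k, α i k) ≤ f (i.1 + 1))}

lemma badSet_zero_mem (m : ℕ) (f : ℕ → ℕ) : 0 ∈ badSet m f :=
  ⟨fun i => i.elim0, fun i => i.elim0, fun i => i.elim0⟩

lemma badSet_mono (m : ℕ) {f f' : ℕ → ℕ} (h : ∀ n, f n ≤ f' n) :
    badSet m f ⊆ badSet m f' := by
  rintro t ⟨α, hbad, hbd⟩
  exact ⟨α, hbad, fun i => (hbd i).trans (h _)⟩

lemma badSet_bddAbove (m : ℕ) (f : ℕ → ℕ) : BddAbove (badSet m f) := by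
  by_contra hub
  rw [not_bddAbove_iff] at hub
  -- there are bad bounded sequences of every length N+1
  have hall : ∀ N : ℕ, ∃ α : Fin (N + 1) → (Fin m → ℕ),
      (∀ i j : Fin (N + 1), i < j → ¬ α i ≤ α j) ∧
      (∀ i : Fin (N + 1), (∑ k, α i k) ≤ f (i.1 + 1)) := by
    intro N
    obtain ⟨t, ⟨α, hbad, hbd⟩, ht⟩ := hub N
    have hle : N + 1 ≤ t := ht
    refine ⟨α ∘ Fin.castLE hle, fun i j hij => hbad _ _ ?_, fun i => hbd _⟩
    exact hij
  -- the compact space of sequences with coordinates bounded by f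
  classical
  let Y : ℕ → Type := fun i => Fin m → Fin (f (i + 1) + 1)
  letI : ∀ i, TopologicalSpace (Y i) := fun _ => ⊥
  haveI : ∀ i, DiscreteTopology (Y i) := fun i => ⟨rfl⟩
  haveI : ∀ i, Finite (Y i) := fun i => inferInstance
  haveI : ∀ i, CompactSpace (Y i) := fun i => Finite.compactSpace
  let X := ∀ i : ℕ, Y i
  -- the closed sets of sequences whose length-(N+1) prefix is bad
  let C : ℕ → Set X := fun N =>
    {x | ∀ i j : ℕ, i < j → j ≤ N → ¬ (fun k => ((x i k : ℕ))) ≤ (fun k => ((x j k : ℕ)))}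
  have hCanti : ∀ N, C (N + 1) ⊆ C N := by
    intro N x hx i j hij hjN
    exact hx i j hij (hjN.trans (Nat.le_succ N))
  have hCne : ∀ N, (C N).Nonempty := by
    intro N
    obtain ⟨α, hbad, hbd⟩ := hall N
    have hcoord : ∀ (i : Fin (N + 1)) (k : Fin m), α i k < f (i.1 + 1) + 1 := by
      intro i k
      have : α i k ≤ ∑ k', α i k' :=
        Finset.single_le_sum (f := fun k' => α i k') (fun _ _ => Nat.zero_le _)
          (Finset.mem_univ k)
      exact Nat.lt_succ_of_le (this.trans (hbd i))
    refine ⟨fun i k => if h : i ≤ N then ⟨α ⟨i, Nat.lt_succ_of_le h⟩ k, hcoord _ k⟩ else 0,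
      ?_⟩
    intro i j hij hjN hle
    have hiN : i ≤ N := (Nat.le_of_lt hij).trans hjN
    apply hbad ⟨i, Nat.lt_succ_of_le hiN⟩ ⟨j, Nat.lt_succ_of_le hjN⟩ hij
    intro k
    have := hle k
    simpa [hiN, hjN] using this
  have hCcl : ∀ N, IsClosed (C N) := by
    intro N
    have : C N = ⋂ (i : ℕ) (j : ℕ) (_ : i < j) (_ : j ≤ N),
        (fun x : X => (x i, x j)) ⁻¹'
          {p : Y i × Y j | ¬ (fun k => ((p.1 k : ℕ))) ≤ (fun k => ((p.2 k : ℕ)))} := by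
      ext x
      simp only [Set.mem_iInter, Set.mem_preimage, Set.mem_setOf_eq]
      rfl
    rw [this]
    refine isClosed_iInter fun i => isClosed_iInter fun j =>
      isClosed_iInter fun _ => isClosed_iInter fun _ => ?_
    exact IsClosed.preimage (Continuous.prodMk (continuous_apply i) (continuous_apply j))
      (isClosed_discrete _)
  obtain ⟨x, hx⟩ := IsCompact.nonempty_iInter_of_sequence_nonempty_isCompact_isClosed
    C hCanti hCne ((isClosed_univ.isCompact).of_isClosed_subset (hCcl 0) (Set.subset_univ _))
    hCcl
  simp only [Set.mem_iInter] at hx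
  -- contradiction with Dickson's lemma
  have hpwo : IsPWO (Set.univ : Set (Fin m → ℕ)) := isPWO_of_wellQuasiOrderedLE _
  obtain ⟨i, j, hij, hle⟩ := hpwo.exists_lt (f := fun n k => ((x n k : ℕ))) (fun _ => Set.mem_univ _)
  exact hx j i j hij le_rfl hle

theorem stmt_2 (m : ℕ) (hm : 1 ≤ m) :
    ∃ B : (ℕ → ℕ) → ℕ,
      (∀ f f' : ℕ → ℕ, (∀ n, 1 ≤ f n) → (∀ n, 1 ≤ f' n) → Monotone f → Monotone f' →
        (∀ n, f n ≤ f' n) → B f ≤ B f') ∧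
      (∀ f : ℕ → ℕ, (∀ n, 1 ≤ f n) → Monotone f →
        ∀ (t : ℕ) (α : Fin t → (Fin m → ℕ)),
          (∀ i j : Fin t, i < j → ¬ α i ≤ α j) →
          (∀ i : Fin t, (∑ k, α i k) ≤ f (i.1 + 1)) →
          t ≤ B f) := by
  refine ⟨fun f => sSup (badSet m f), ?_, ?_⟩
  · intro f f' _ _ _ _ hle
    exact csSup_le_csSup (badSet_bddAbove m f') ⟨0, badSet_zero_mem m f⟩
      (badSet_mono m hle)
  · intro f _ _ t α hbad hbd
    exact le_csSup (badSet_bddAbove m f) ⟨α, hbad, hbd⟩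
end

section
/- Let m ≥ 2 and suppose α₁, ..., α_t is an antichain in ℕ^m such that the subsequence indexed by s₁ < s₂ < ... < s_r has the property that deleting the (k+1)-st coordinate from each α_{s_i} yields an antichain in ℕ^{m-1}. Suppose further the original antichain is f-bounded for a non-decreasing f. If there exists an index μ+1 ≤ t with μ = s_r + N, where N bounds the length of any antichain in ℕ^m that is f(s_r + ·)-bounded and has (k+1)-st coordinates all at most f(s_r) (and first k coordinates bounded by a fixed β), then there exists c with s_r < c ≤ μ+1 such that adjoining the (k+1)-deleted vector of α_c to the deleted subsequence still yields an antichain in ℕ^{m-1}. -/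
/- STATEMENT 3 (Lemma 3.3 (1)): ambient dimension is m + 1 ≥ 2 (so 1 ≤ m), and we
delete the (k+1)-st coordinate (0-indexed coordinate k, with k < m, i.e.
k + 1 ≤ m = (m+1) - 1).  Sequences are 1-indexed via i ↦ i.1 + 1; the 1-based
position of the last chosen index s_r is sr = (s ⟨r-1,_⟩).1 + 1. -/
theorem stmt_3 (m k t r : ℕ) (hm : 1 ≤ m) (hk : k < m) (hr : 0 < r)
    (f : ℕ → ℕ) (hfpos : ∀ n, 1 ≤ f n) (hfmono : Monotone f)
    (α : Fin t → (Fin (m + 1) → ℕ))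
    -- α₁,...,α_t is an f-bounded antichain in ℕ^{m+1}
    (hanti : ∀ i j : Fin t, i < j → ¬ α i ≤ α j)
    (hbdd : ∀ i : Fin t, (∑ x, α i x) ≤ f (i.1 + 1))
    -- a strictly increasing choice of indices s₁ < ... < s_r
    (s : Fin r → Fin t) (hs : StrictMono s)
    -- whose (k+1)-deleted vectors form an antichain in ℕ^m
    (hdel : ∀ i j : Fin r, i < j →
      ¬ (⟨k, by omega⟩ : Fin (m + 1)).removeNth (α (s i)) ≤
        (⟨k, by omega⟩ : Fin (m + 1)).removeNth (α (s j)))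
    -- β ∈ ℕ^k bounding the first k coordinates, and N = B_m^{k+1}(f(s_r + ·), β, f(s_r)):
    -- N bounds the length of every antichain in ℕ^{m+1} which is f(s_r + ·)-bounded,
    -- has its first k coordinates bounded by β and its (k+1)-st coordinate ≤ f(s_r)
    (β : Fin k → ℕ) (N : ℕ)
    (hN : ∀ (u : ℕ) (γ : Fin u → (Fin (m + 1) → ℕ)),
      (∀ i j : Fin u, i < j → ¬ γ i ≤ γ j) →
      (∀ i : Fin u, (∑ x, γ i x) ≤ f ((s ⟨r - 1, by omega⟩).1 + 1 + (i.1 + 1))) →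
      (∀ (i : Fin u) (x : Fin k), γ i ⟨x.1, by omega⟩ ≤ β x) →
      (∀ i : Fin u, γ i ⟨k, by omega⟩ ≤ f ((s ⟨r - 1, by omega⟩).1 + 1)) →
      u ≤ N)
    -- the original antichain also satisfies the β-bound on the first k coordinates
    (hβ : ∀ (i : Fin t) (x : Fin k), α i ⟨x.1, by omega⟩ ≤ β x)
    -- if μ + 1 ≤ t where μ = s_r + N (in 1-based indexing)
    (hμ : (s ⟨r - 1, by omega⟩).1 + 1 + N + 1 ≤ t) :
    -- then some c with s_r < c ≤ μ + 1 extends the deleted antichain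
    ∃ c : Fin t,
      (s ⟨r - 1, by omega⟩).1 + 1 < c.1 + 1 ∧
      c.1 + 1 ≤ (s ⟨r - 1, by omega⟩).1 + 1 + N + 1 ∧
      ∀ i : Fin r,
        ¬ (⟨k, by omega⟩ : Fin (m + 1)).removeNth (α (s i)) ≤
          (⟨k, by omega⟩ : Fin (m + 1)).removeNth (α c) := by
  by_contra hcon
  push_neg at hcon
  set sr := (s ⟨r - 1, by omega⟩).1 with hsr
  -- the candidate vectors
  have hc : ∀ j : Fin (N + 1), sr + 1 + j.1 < t := by
    intro j; have := j.2; omega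
  set γ : Fin (N + 1) → (Fin (m + 1) → ℕ) := fun j => α ⟨sr + 1 + j.1, hc j⟩ with hγ
  -- each candidate is dominated (after deletion) by some chosen vector
  have hdom : ∀ j : Fin (N + 1), ∃ i : Fin r,
      (⟨k, by omega⟩ : Fin (m + 1)).removeNth (α (s i)) ≤
        (⟨k, by omega⟩ : Fin (m + 1)).removeNth (γ j) := by
    intro j
    have := hcon ⟨sr + 1 + j.1, hc j⟩ (by show sr + 1 < sr + 1 + j.1 + 1; omega)
      (by show sr + 1 + j.1 + 1 ≤ sr + 1 + N + 1; have := j.2; omega)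
    exact this
  -- s i ≤ s last, hence (s i).1 ≤ sr
  have hsle : ∀ i : Fin r, (s i).1 ≤ sr := by
    intro i
    have : s i ≤ s ⟨r - 1, by omega⟩ := hs.monotone (by
      have := i.2; exact Fin.mk_le_of_le_val (by simp; omega))
    exact this
  -- coordinate k bound
  have hkbd : ∀ j : Fin (N + 1), γ j ⟨k, by omega⟩ ≤ f (sr + 1) := by
    intro j
    obtain ⟨i, hi⟩ := hdom j
    have hlt : s i < (⟨sr + 1 + j.1, hc j⟩ : Fin t) := by
      rw [Fin.lt_def]; show (s i).1 < sr + 1 + j.1; have := hsle i; omega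
    have hnle : ¬ α (s i) ≤ γ j := hanti _ _ hlt
    -- all coordinates ≠ k are dominated
    have hcoord : ∀ x : Fin (m + 1), x ≠ ⟨k, by omega⟩ → α (s i) x ≤ γ j x := by
      intro x hx
      obtain ⟨y, hy⟩ := Fin.exists_succAbove_eq hx
      rw [← hy]; exact hi y
    have hkk : γ j ⟨k, by omega⟩ < α (s i) ⟨k, by omega⟩ := by
      by_contra h
      push_neg at h
      exact hnle (fun x => by
        by_cases hx : x = ⟨k, by omega⟩
        · subst hx; exact h
        · exact hcoord x hx)
    calc γ j ⟨k, by omega⟩ ≤ α (s i) ⟨k, by omega⟩ := hkk.le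
      _ ≤ ∑ x, α (s i) x := Finset.single_le_sum (fun _ _ => Nat.zero_le _) (Finset.mem_univ _)
      _ ≤ f ((s i).1 + 1) := hbdd _
      _ ≤ f (sr + 1) := hfmono (by have := hsle i; omega)
  have := hN (N + 1) γ
    (fun i j hij => hanti _ _ (by
      simp only [Fin.mk_lt_mk]
      exact Nat.add_lt_add_left (Fin.lt_iff_val_lt_val.mp hij) _))
    (fun i => by
      have := hbdd ⟨sr + 1 + i.1, hc i⟩
      simpa [hγ, Nat.add_assoc] using this)
    (fun i x => hβ _ x)
    hkbd
  omega
end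

section
/- Let F = {f₁,...,f_s} ⊆ K[x₁,...,x_m] be nonzero polynomials with deg(f_i) ≤ d, and let B₀ = F, B_{n+1} = B_n ∪ S_{B_n} be the sequence of sets produced by Buchberger's algorithm (S_{B_n} being the set of nonzero remainders of S-polynomials of pairs from B_n modulo B_n), with respect to a graded monomial order. Then every b ∈ B_n can be written b = a₁f₁ + ... + a_sf_s with deg(a_i) ≤ (3ⁿ − 1)d for all i. -/
open MvPolynomial
open scoped Classical

/-- The leading monomial (exponent vector) of a polynomial with respect to a
monomial order `ord`; `lmon ord 0 = 0` by convention. -/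
noncomputable def lmon {K : Type*} [Field K] {m : ℕ}
    (ord : LinearOrder (Fin m →₀ ℕ)) (f : MvPolynomial (Fin m) K) : Fin m →₀ ℕ :=
  if h : f = 0 then 0 else
    @Finset.max' _ ord f.support (MvPolynomial.support_nonempty.mpr h)

/-- The S-polynomial S(f,g) = (x^γ/lt(f))·f − (x^γ/lt(g))·g, where
x^γ = lcm(lm f, lm g), i.e. γ = lm f ⊔ lm g (componentwise max). -/
noncomputable def spoly {K : Type*} [Field K] {m : ℕ}
    (ord : LinearOrder (Fin m →₀ ℕ)) (f g : MvPolynomial (Fin m) K) :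
    MvPolynomial (Fin m) K :=
  (monomial ((lmon ord f ⊔ lmon ord g) - lmon ord f)) (f.coeff (lmon ord f))⁻¹ * f -
    (monomial ((lmon ord f ⊔ lmon ord g) - lmon ord g)) (g.coeff (lmon ord g))⁻¹ * g

/-- `IsRemainder ord f B r`: `r` is a possible remainder of `f` on multivariate
division by the finite set `B`: `f = Σ_{g ∈ B} a_g g + r` with
`lm(a_g g) ≼ lm f` for all nonzero summands, and `r` reduced modulo `B`
(no leading monomial of an element of `B` divides a monomial of `r`). -/
def IsRemainder {K : Type*} [Field K] {m : ℕ}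
    (ord : LinearOrder (Fin m →₀ ℕ)) (f : MvPolynomial (Fin m) K)
    (B : Finset (MvPolynomial (Fin m) K)) (r : MvPolynomial (Fin m) K) : Prop :=
  ∃ a : MvPolynomial (Fin m) K → MvPolynomial (Fin m) K,
    f = (∑ g ∈ B, a g * g) + r ∧
    (∀ g ∈ B, a g * g ≠ 0 → ord.le (lmon ord (a g * g)) (lmon ord f)) ∧
    (∀ g ∈ B, g ≠ 0 → ∀ β ∈ r.support, ¬ lmon ord g ≤ β)

lemma sum_conv {m : ℕ} (β : Fin m →₀ ℕ) : (β.sum fun _ e => e) = ∑ x, β x :=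
  Finsupp.sum_fintype _ _ fun _ => rfl

lemma lmon_mem {K : Type*} [Field K] {m : ℕ} (ord : LinearOrder (Fin m →₀ ℕ))
    {f : MvPolynomial (Fin m) K} (hf : f ≠ 0) : lmon ord f ∈ f.support := by
  rw [lmon, dif_neg hf]; exact Finset.max'_mem _ _

lemma le_lmon {K : Type*} [Field K] {m : ℕ} (ord : LinearOrder (Fin m →₀ ℕ))
    {f : MvPolynomial (Fin m) K} {β : Fin m →₀ ℕ} (hβ : β ∈ f.support) :
    ord.le β (lmon ord f) := by
  have hf : f ≠ 0 := by rintro rfl; simp at hβ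
  rw [lmon, dif_neg hf]
  exact @Finset.le_max' _ ord f.support β hβ

lemma deg_le_sum_lmon {K : Type*} [Field K] {m : ℕ} (ord : LinearOrder (Fin m →₀ ℕ))
    (hgraded : ∀ a b : Fin m →₀ ℕ, ord.le a b → (∑ x, a x) ≤ ∑ x, b x)
    (f : MvPolynomial (Fin m) K) :
    f.totalDegree ≤ ∑ x, (lmon ord f) x := by
  apply Finset.sup_le
  intro β hβ
  rw [sum_conv]
  exact hgraded _ _ (le_lmon ord hβ)

lemma sum_lmon_le_deg {K : Type*} [Field K] {m : ℕ} (ord : LinearOrder (Fin m →₀ ℕ))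
    (f : MvPolynomial (Fin m) K) :
    (∑ x, (lmon ord f) x) ≤ f.totalDegree := by
  by_cases hf : f = 0
  · simp [lmon, hf]
  · rw [← sum_conv]
    exact le_totalDegree (lmon_mem ord hf)

lemma deg_add_le_deg_mul {K : Type*} [Field K] {m : ℕ} (ord : LinearOrder (Fin m →₀ ℕ))
    (hadd : ∀ a b c : Fin m →₀ ℕ, ord.le a b → ord.le (a + c) (b + c))
    (hgraded : ∀ a b : Fin m →₀ ℕ, ord.le a b → (∑ x, a x) ≤ ∑ x, b x)
    {a g : MvPolynomial (Fin m) K} (ha : a ≠ 0) (hg : g ≠ 0) :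
    a.totalDegree + g.totalDegree ≤ (a * g).totalDegree := by
  have hc : (a * g).coeff (lmon ord a + lmon ord g)
      = a.coeff (lmon ord a) * g.coeff (lmon ord g) := by
    rw [MvPolynomial.coeff_mul]
    apply Finset.sum_eq_single_of_mem (lmon ord a, lmon ord g)
      (Finset.HasAntidiagonal.mem_antidiagonal.mpr rfl)
    rintro ⟨u, v⟩ huv hne
    have huv' : u + v = lmon ord a + lmon ord g := Finset.HasAntidiagonal.mem_antidiagonal.mp huv
    by_cases hu : u ∈ a.support
    · by_cases hv : v ∈ g.support
      · exfalso
        have h1 : ord.le (u + v) (lmon ord a + v) := hadd _ _ _ (le_lmon ord hu)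
        have h2 : ord.le (v + lmon ord a) (lmon ord g + lmon ord a) :=
          hadd _ _ _ (le_lmon ord hv)
        rw [add_comm v, add_comm (lmon ord g)] at h2
        have h3 : ord.le (lmon ord a + v) (u + v) := huv' ▸ h2
        have h4 : u + v = lmon ord a + v := ord.le_antisymm _ _ h1 h3
        have hu' : u = lmon ord a := add_right_cancel h4
        have hv' : v = lmon ord g := by
          have h5 := huv'; rw [hu'] at h5; exact add_left_cancel h5
        exact hne (by rw [hu', hv'])
      · simp [MvPolynomial.notMem_support_iff.mp hv]
    · simp [MvPolynomial.notMem_support_iff.mp hu]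
  have hmem : lmon ord a + lmon ord g ∈ (a * g).support := by
    rw [MvPolynomial.mem_support_iff, hc]
    exact mul_ne_zero (MvPolynomial.mem_support_iff.mp (lmon_mem ord ha))
      (MvPolynomial.mem_support_iff.mp (lmon_mem ord hg))
  calc a.totalDegree + g.totalDegree
      ≤ (∑ x, lmon ord a x) + ∑ x, lmon ord g x :=
        add_le_add (deg_le_sum_lmon ord hgraded a) (deg_le_sum_lmon ord hgraded g)
    _ = ∑ x, (lmon ord a + lmon ord g) x := by
        rw [← Finset.sum_add_distrib]; simp [Finsupp.add_apply]
    _ ≤ (a * g).totalDegree := by rw [← sum_conv]; exact le_totalDegree hmem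

/- STATEMENT 13 (Proposition 4.3 (1)): with B₀ = F (nonzero polynomials of degree ≤ d)
and B_{n+1} = B_n ∪ S_{B_n} (adjoining nonzero remainders of S-polynomials of pairs of
B_n modulo B_n), with respect to a graded monomial order, every b ∈ B_n can be written
b = Σ_{g ∈ F} a_g·g with deg(a_g) ≤ (3ⁿ − 1)·d. -/
theorem stmt_13 {K : Type*} [Field K] (m : ℕ)
    (ord : LinearOrder (Fin m →₀ ℕ))
    (hzero : ∀ a : Fin m →₀ ℕ, ord.le 0 a)
    (hadd : ∀ a b c : Fin m →₀ ℕ, ord.le a b → ord.le (a + c) (b + c))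
    (hgraded : ∀ a b : Fin m →₀ ℕ, ord.le a b → (∑ x, a x) ≤ ∑ x, b x)
    (d : ℕ) (hd : 1 ≤ d)
    (F : Finset (MvPolynomial (Fin m) K)) (hF0 : (0 : MvPolynomial (Fin m) K) ∉ F)
    (hFd : ∀ g ∈ F, g.totalDegree ≤ d)
    (B : ℕ → Finset (MvPolynomial (Fin m) K))
    (hB0 : B 0 = F)
    (hstep : ∀ (n : ℕ) (b : MvPolynomial (Fin m) K),
      b ∈ B (n + 1) ↔ b ∈ B n ∨
        (b ≠ 0 ∧ ∃ p ∈ B n, ∃ q ∈ B n, IsRemainder ord (spoly ord p q) (B n) b)) :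
    ∀ n : ℕ, ∀ b ∈ B n,
      ∃ a : MvPolynomial (Fin m) K → MvPolynomial (Fin m) K,
        b = ∑ g ∈ F, a g * g ∧ ∀ g ∈ F, (a g).totalDegree ≤ (3 ^ n - 1) * d := by
  have hnz : ∀ n, ∀ b ∈ B n, b ≠ 0 := by
    intro n
    induction n with
    | zero => intro b hb; rw [hB0] at hb; rintro rfl; exact hF0 hb
    | succ n ih =>
      intro b hb
      rcases (hstep n b).mp hb with h | ⟨h0, -⟩
      · exact ih b h
      · exact h0
  have tdsub : ∀ x y : MvPolynomial (Fin m) K,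
      (x - y).totalDegree ≤ max x.totalDegree y.totalDegree := by
    intro x y
    rw [sub_eq_add_neg]
    exact (totalDegree_add _ _).trans (by rw [totalDegree_neg])
  have hmdeg : ∀ u w : Fin m →₀ ℕ, ∀ c : K,
      ((monomial ((u ⊔ w) - u)) c).totalDegree ≤ ∑ x, w x := by
    intro u w c
    refine (totalDegree_monomial_le _ _).trans ?_
    rw [show (((u ⊔ w) - u : Fin m →₀ ℕ).sum fun _ => id) = ∑ x, ((u ⊔ w) - u) x from
      Finsupp.sum_fintype _ _ fun _ => rfl]
    refine Finset.sum_le_sum fun x _ => ?_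
    simp only [Finsupp.tsub_apply, Finsupp.sup_apply]
    exact tsub_le_iff_right.mpr (sup_le le_add_self le_self_add)
  intro n
  induction n with
  | zero =>
    intro b hb
    rw [hB0] at hb
    refine ⟨fun g => if g = b then 1 else 0, ?_, ?_⟩
    · have h : ∀ g ∈ F, (if g = b then (1 : MvPolynomial (Fin m) K) else 0) * g
          = if g = b then g else 0 := by
        intro g _; split <;> simp
      rw [Finset.sum_congr rfl h, Finset.sum_ite_eq' F b (fun g => g), if_pos hb]
    · intro g hg
      by_cases h : g = b <;> simp [h]
  | succ n IH =>
    intro b hb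
    have ht1 : 1 ≤ 3 ^ n := Nat.one_le_pow _ _ (by norm_num)
    obtain ⟨s, hs⟩ : ∃ s, 3 ^ n = s + 1 := ⟨3 ^ n - 1, by omega⟩
    have hpow : (3 ^ (n + 1) - 1) = 3 * s + 2 := by rw [pow_succ, hs]; omega
    rcases (hstep n b).mp hb with hbB | ⟨hb0, p, hp, q, hq, a, heq, hlm, -⟩
    · obtain ⟨c, hc1, hc2⟩ := IH b hbB
      refine ⟨c, hc1, fun g hg => (hc2 g hg).trans (Nat.mul_le_mul_right d ?_)⟩
      have h2 : 3 ^ n ≤ 3 ^ (n + 1) := Nat.pow_le_pow_right (by norm_num) (Nat.le_succ n)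
      omega
    · -- the new-element case
      have hp0 : p ≠ 0 := hnz n p hp
      have hq0 : q ≠ 0 := hnz n q hq
      have hdegB : ∀ g ∈ B n, g.totalDegree ≤ (s + 1) * d := by
        intro g hg
        obtain ⟨c, hc1, hc2⟩ := IH g hg
        rw [hc1]
        apply totalDegree_finsetSum_le
        intro f hf
        calc (c f * f).totalDegree ≤ (c f).totalDegree + f.totalDegree := totalDegree_mul _ _
          _ ≤ (3 ^ n - 1) * d + d := add_le_add (hc2 f hf) (hFd f hf)
          _ = (s + 1) * d := by rw [hs, Nat.add_sub_cancel, add_mul, one_mul]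
      have hdp : p.totalDegree ≤ (s + 1) * d := hdegB p hp
      have hdq : q.totalDegree ≤ (s + 1) * d := hdegB q hq
      have hm1 : ((monomial ((lmon ord p ⊔ lmon ord q) - lmon ord p))
          ((p.coeff (lmon ord p))⁻¹)).totalDegree ≤ (s + 1) * d :=
        (hmdeg _ _ _).trans ((sum_lmon_le_deg ord q).trans hdq)
      have hm2 : ((monomial ((lmon ord p ⊔ lmon ord q) - lmon ord q))
          ((q.coeff (lmon ord q))⁻¹)).totalDegree ≤ (s + 1) * d := by
        rw [sup_comm]
        exact (hmdeg _ _ _).trans ((sum_lmon_le_deg ord p).trans hdp)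
      have hspoly : (spoly ord p q).totalDegree ≤ (2 * s + 2) * d := by
        rw [spoly]
        refine (tdsub _ _).trans (max_le ?_ ?_)
        · calc _ ≤ _ := totalDegree_mul _ _
            _ ≤ (s + 1) * d + (s + 1) * d := add_le_add hm1 hdp
            _ = (2 * s + 2) * d := by ring
        · calc _ ≤ _ := totalDegree_mul _ _
            _ ≤ (s + 1) * d + (s + 1) * d := add_le_add hm2 hdq
            _ = (2 * s + 2) * d := by ring
      have hag : ∀ g ∈ B n, (a g).totalDegree ≤ (2 * s + 2) * d := by
        intro g hg
        by_cases hag0 : a g = 0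
        · simp [hag0]
        have hg0 : g ≠ 0 := hnz n g hg
        have hne : a g * g ≠ 0 := mul_ne_zero hag0 hg0
        have h1 : (a g * g).totalDegree ≤ (spoly ord p q).totalDegree :=
          (deg_le_sum_lmon ord hgraded _).trans
            ((hgraded _ _ (hlm g hg hne)).trans (sum_lmon_le_deg ord _))
        have h2 : (a g).totalDegree + g.totalDegree ≤ (a g * g).totalDegree :=
          deg_add_le_deg_mul ord hadd hgraded hag0 hg0
        exact le_trans (le_trans (Nat.le_add_right _ _) h2) (h1.trans hspoly)
      have hrepex : ∀ g : MvPolynomial (Fin m) K,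
          ∃ c : MvPolynomial (Fin m) K → MvPolynomial (Fin m) K, g ∈ B n →
            (g = ∑ f ∈ F, c f * f ∧ ∀ f ∈ F, (c f).totalDegree ≤ (3 ^ n - 1) * d) := by
        intro g
        by_cases hg : g ∈ B n
        · obtain ⟨c, h1, h2⟩ := IH g hg; exact ⟨c, fun _ => ⟨h1, h2⟩⟩
        · exact ⟨0, fun h => absurd h hg⟩
      choose rep hrep using hrepex
      have hrepd : ∀ g ∈ B n, ∀ f ∈ F, (rep g f).totalDegree ≤ s * d := by
        intro g hg f hf
        refine ((hrep g hg).2 f hf).trans_eq ?_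
        rw [hs, Nat.add_sub_cancel]
      refine ⟨fun f =>
        (monomial ((lmon ord p ⊔ lmon ord q) - lmon ord p)) ((p.coeff (lmon ord p))⁻¹) * rep p f
        - (monomial ((lmon ord p ⊔ lmon ord q) - lmon ord q)) ((q.coeff (lmon ord q))⁻¹) * rep q f
        - ∑ g ∈ B n, a g * rep g f, ?_, ?_⟩
      · have hbe : b = spoly ord p q - ∑ g ∈ B n, a g * g := by rw [heq]; ring
        rw [hbe, spoly]
        have key : ∀ (M₁ M₂ : MvPolynomial (Fin m) K),
            ∑ f ∈ F, (M₁ * rep p f - M₂ * rep q f - ∑ g ∈ B n, a g * rep g f) * f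
              = M₁ * p - M₂ * q - ∑ g ∈ B n, a g * g := by
          intro M₁ M₂
          calc ∑ f ∈ F, (M₁ * rep p f - M₂ * rep q f - ∑ g ∈ B n, a g * rep g f) * f
              = ∑ f ∈ F, (M₁ * (rep p f * f) - M₂ * (rep q f * f)
                  - ∑ g ∈ B n, a g * (rep g f * f)) := by
                refine Finset.sum_congr rfl fun f _ => ?_
                simp only [sub_mul, Finset.sum_mul, mul_assoc]
            _ = M₁ * (∑ f ∈ F, rep p f * f) - M₂ * (∑ f ∈ F, rep q f * f)
                  - ∑ f ∈ F, ∑ g ∈ B n, a g * (rep g f * f) := by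
                rw [Finset.sum_sub_distrib, Finset.sum_sub_distrib,
                  ← Finset.mul_sum, ← Finset.mul_sum]
            _ = M₁ * p - M₂ * q - ∑ g ∈ B n, a g * g := by
                rw [← (hrep p hp).1, ← (hrep q hq).1, Finset.sum_comm]
                congr 1
                refine Finset.sum_congr rfl fun g hg => ?_
                rw [← Finset.mul_sum]
                congr 1
                exact ((hrep g hg).1).symm
        exact (key _ _).symm
      · intro f hf
        rw [hpow]
        refine (tdsub _ _).trans (max_le ((tdsub _ _).trans (max_le ?_ ?_)) ?_)
        · calc _ ≤ _ := totalDegree_mul _ _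
            _ ≤ (s + 1) * d + s * d := add_le_add hm1 (hrepd p hp f hf)
            _ ≤ (3 * s + 2) * d := by nlinarith
        · calc _ ≤ _ := totalDegree_mul _ _
            _ ≤ (s + 1) * d + s * d := add_le_add hm2 (hrepd q hq f hf)
            _ ≤ (3 * s + 2) * d := by nlinarith
        · refine totalDegree_finsetSum_le fun g hg => ?_
          calc _ ≤ _ := totalDegree_mul _ _
            _ ≤ (2 * s + 2) * d + s * d := add_le_add (hag g hg) (hrepd g hg f hf)
            _ = (3 * s + 2) * d := by ring
end

section
/- With the hypotheses of the Buchberger degree-bound setting (deg f_i ≤ d, B₀ = F, B_{n+1} = B_n ∪ S_{B_n}, graded monomial order), every element b ∈ B_n satisfies deg(lt(b)) ≤ 3ⁿ·d, i.e., deg(b) ≤ 3ⁿ·d. -/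
open MvPolynomial
open scoped Classical

lemma sum_lmon_le {K : Type*} [Field K] {m : ℕ}
    (ord : LinearOrder (Fin m →₀ ℕ)) (f : MvPolynomial (Fin m) K) :
    (∑ x, lmon ord f x) ≤ f.totalDegree := by
  unfold lmon
  split
  · simp
  · next h =>
    have hmem := @Finset.max'_mem _ ord f.support (MvPolynomial.support_nonempty.mpr h)
    have := MvPolynomial.le_totalDegree hmem
    rwa [Finsupp.sum_fintype _ _ (fun _ => rfl)] at this

lemma totalDegree_le_sum_lmon {K : Type*} [Field K] {m : ℕ}
    (ord : LinearOrder (Fin m →₀ ℕ))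
    (hgraded : ∀ a b : Fin m →₀ ℕ, ord.le a b → (∑ x, a x) ≤ ∑ x, b x)
    (f : MvPolynomial (Fin m) K) :
    f.totalDegree ≤ ∑ x, lmon ord f x := by
  rw [MvPolynomial.totalDegree]
  apply Finset.sup_le
  intro s hs
  have h : f ≠ 0 := fun h0 => by simp [h0] at hs
  have hle : ord.le s (lmon ord f) := by
    unfold lmon; rw [dif_neg h]
    exact @Finset.le_max' _ ord _ _ hs
  rw [Finsupp.sum_fintype _ _ (fun _ => rfl)]
  exact hgraded _ _ hle


/- STATEMENT 14 (Proposition 4.3 (2)): in the Buchberger degree-bound setting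
(B₀ = F nonzero of degree ≤ d, B_{n+1} = B_n ∪ S_{B_n}, graded monomial order),
every b ∈ B_n satisfies deg(lt(b)) ≤ 3ⁿ·d, i.e. deg(b) ≤ 3ⁿ·d. -/
theorem stmt_14 {K : Type*} [Field K] (m : ℕ)
    (ord : LinearOrder (Fin m →₀ ℕ))
    (hzero : ∀ a : Fin m →₀ ℕ, ord.le 0 a)
    (hadd : ∀ a b c : Fin m →₀ ℕ, ord.le a b → ord.le (a + c) (b + c))
    (hgraded : ∀ a b : Fin m →₀ ℕ, ord.le a b → (∑ x, a x) ≤ ∑ x, b x)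
    (d : ℕ) (hd : 1 ≤ d)
    (F : Finset (MvPolynomial (Fin m) K)) (hF0 : (0 : MvPolynomial (Fin m) K) ∉ F)
    (hFd : ∀ g ∈ F, g.totalDegree ≤ d)
    (B : ℕ → Finset (MvPolynomial (Fin m) K))
    (hB0 : B 0 = F)
    (hstep : ∀ (n : ℕ) (b : MvPolynomial (Fin m) K),
      b ∈ B (n + 1) ↔ b ∈ B n ∨
        (b ≠ 0 ∧ ∃ p ∈ B n, ∃ q ∈ B n, IsRemainder ord (spoly ord p q) (B n) b)) :
    ∀ n : ℕ, ∀ b ∈ B n,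
      (∑ x, lmon ord b x) ≤ 3 ^ n * d ∧ b.totalDegree ≤ 3 ^ n * d := by
  intro n
  induction n with
  | zero =>
    intro b hb
    rw [hB0] at hb
    have hdeg : b.totalDegree ≤ d := hFd b hb
    simpa using ⟨(sum_lmon_le ord b).trans hdeg, hdeg⟩
  | succ n ih =>
    intro b hb
    -- it suffices to bound the total degree
    suffices h : b.totalDegree ≤ 3 ^ (n + 1) * d from
      ⟨(sum_lmon_le ord b).trans h, h⟩
    rw [hstep] at hb
    rcases hb with hb | ⟨hb0, p, hp, q, hq, a, heq, hle, -⟩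
    · exact (ih b hb).2.trans (Nat.mul_le_mul_right d (Nat.pow_le_pow_right (by norm_num) (Nat.le_succ n)))
    · set s := spoly ord p q with hs
      have hmono : ∀ (u v : MvPolynomial (Fin m) K), u ∈ B n → v ∈ B n →
          ((monomial ((lmon ord u ⊔ lmon ord v) - lmon ord u)) ((u.coeff (lmon ord u))⁻¹) * u).totalDegree
            ≤ 2 * (3 ^ n * d) := by
        intro u v hu hv
        calc ((monomial ((lmon ord u ⊔ lmon ord v) - lmon ord u)) ((u.coeff (lmon ord u))⁻¹) * u).totalDegree
            ≤ ((monomial ((lmon ord u ⊔ lmon ord v) - lmon ord u)) ((u.coeff (lmon ord u))⁻¹)).totalDegree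
              + u.totalDegree := totalDegree_mul _ _
          _ ≤ (((lmon ord u ⊔ lmon ord v) - lmon ord u).sum fun _ e => e) + u.totalDegree := by
              gcongr; exact totalDegree_monomial_le _ _
          _ = (∑ x, ((lmon ord u ⊔ lmon ord v) - lmon ord u) x) + u.totalDegree := by
              rw [Finsupp.sum_fintype _ _ (fun _ => rfl)]
          _ ≤ (∑ x, lmon ord v x) + u.totalDegree := by
              refine Nat.add_le_add_right (Finset.sum_le_sum fun x _ => ?_) _
              rw [Finsupp.tsub_apply, Finsupp.sup_apply]
              exact Nat.sub_le_iff_le_add.mpr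
                (max_le (Nat.le_add_left _ _) (Nat.le_add_right _ _))
          _ ≤ 3 ^ n * d + 3 ^ n * d := Nat.add_le_add ((ih v hv).1) ((ih u hu).2)
          _ = 2 * (3 ^ n * d) := by ring
      have hsdeg : s.totalDegree ≤ 2 * (3 ^ n * d) := by
        rw [hs, spoly]
        refine (totalDegree_sub _ _).trans (max_le (hmono p q hp hq) ?_)
        have := hmono q p hq hp
        rwa [sup_comm] at this
      have hterm : ∀ g ∈ B n, (a g * g).totalDegree ≤ 2 * (3 ^ n * d) := by
        intro g hg
        by_cases h0 : a g * g = 0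
        · simp [h0]
        · calc (a g * g).totalDegree ≤ ∑ x, lmon ord (a g * g) x :=
                totalDegree_le_sum_lmon ord hgraded _
            _ ≤ ∑ x, lmon ord s x := hgraded _ _ (hle g hg h0)
            _ ≤ s.totalDegree := sum_lmon_le ord s
            _ ≤ 2 * (3 ^ n * d) := hsdeg
      have hbeq : b = s - ∑ g ∈ B n, a g * g := by rw [heq]; ring
      calc b.totalDegree ≤ max s.totalDegree (∑ g ∈ B n, a g * g).totalDegree := by
            rw [hbeq]; exact totalDegree_sub _ _
        _ ≤ 2 * (3 ^ n * d) := max_le hsdeg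
            ((totalDegree_finset_sum _ _).trans (Finset.sup_le hterm))
        _ ≤ 3 ^ (n + 1) * d := by rw [pow_succ]; nlinarith [Nat.one_le_two_pow (n := n)]
end

section
/- The degree bound in effective ideal membership is independent of the field: if Γ : ℕ₊ × ℕ₊ × ℕ → ℕ satisfies, for the field ℚ say, that every g ∈ ⟨f₁,...,f_s⟩ ⊆ K[x₁,...,x_m] with deg f_i ≤ d has a representation with cofactor degrees ≤ Γ(m,d,deg g) via the Buchberger-based construction, then the same function Γ works for every field K, since the bound is derived purely combinatorially from degree estimates in the division algorithm and antichain bounds in ℕ^m. -/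
set_option maxHeartbeats 1000000

noncomputable section
namespace Stmt18
open MvPolynomial

variable {m : ℕ}

/-- total degree of an exponent vector -/
def deg1 (c : Fin m →₀ ℕ) : ℕ := c.sum fun _ e => e

/-- the deg-lex "synonym" map -/
def D (c : Fin m →₀ ℕ) : ℕ ×ₗ Lex (Fin m →₀ ℕ) := toLex (deg1 c, toLex c)

lemma D_inj : Function.Injective (D (m := m)) := by
  intro a b h
  have := congrArg (fun x => (ofLex x).2) h
  simpa [D] using this

lemma deg1_add (a b : Fin m →₀ ℕ) : deg1 (a + b) = deg1 a + deg1 b := by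
  simp [deg1, Finsupp.sum_add_index]

lemma deg1_eq_sum (c : Fin m →₀ ℕ) : deg1 c = ∑ k, c k := by
  simp [deg1, Finsupp.sum_fintype]

lemma deg1_mono {a b : Fin m →₀ ℕ} (h : a ≤ b) : deg1 a ≤ deg1 b := by
  rw [deg1_eq_sum, deg1_eq_sum]
  exact Finset.sum_le_sum fun k _ => h k

lemma D_le_iff {a b : Fin m →₀ ℕ} : D a ≤ D b ↔ deg1 a < deg1 b ∨ (deg1 a = deg1 b ∧ toLex a ≤ toLex b) := by
  simp [D, Prod.Lex.le_iff]

lemma D_lt_iff {a b : Fin m →₀ ℕ} : D a < D b ↔ deg1 a < deg1 b ∨ (deg1 a = deg1 b ∧ toLex a < toLex b) := by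
  simp [D, Prod.Lex.lt_iff]

lemma deg1_le_of_D_le {a b : Fin m →₀ ℕ} (h : D a ≤ D b) : deg1 a ≤ deg1 b := by
  rcases D_le_iff.1 h with h | h
  · exact h.le
  · exact h.1.le

lemma D_add_lt_add_iff {a b c : Fin m →₀ ℕ} : D (c + a) < D (c + b) ↔ D a < D b := by
  rw [D_lt_iff, D_lt_iff, deg1_add, deg1_add]
  constructor
  · rintro (h | ⟨h1, h2⟩)
    · exact Or.inl (by omega)
    · refine Or.inr ⟨by omega, ?_⟩
      have : toLex c + toLex a < toLex c + toLex b := by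
        simpa [toLex_add] using h2
      exact lt_of_add_lt_add_left this
  · rintro (h | ⟨h1, h2⟩)
    · exact Or.inl (by omega)
    · refine Or.inr ⟨by omega, ?_⟩
      simpa [toLex_add] using add_lt_add_left h2 (toLex c)

lemma D_add_le_add_iff {a b c : Fin m →₀ ℕ} : D (c + a) ≤ D (c + b) ↔ D a ≤ D b := by
  constructor
  · intro h
    by_contra hb
    exact absurd (D_add_lt_add_iff.2 (lt_of_not_ge hb)) (not_lt_of_ge h)
  · intro h
    rcases lt_or_eq_of_le h with h | h
    · exact (D_add_lt_add_iff.2 h).le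
    · exact le_of_eq (by rw [D_inj h])

lemma D_add_le_add_left {a b : Fin m →₀ ℕ} (c : Fin m →₀ ℕ) (h : D a ≤ D b) :
    D (c + a) ≤ D (c + b) := by
  rcases lt_or_eq_of_le h with h | h
  · exact (D_add_lt_add_iff.2 h).le
  · rw [D_inj h]

lemma D_add_le_add_right {a b : Fin m →₀ ℕ} (c : Fin m →₀ ℕ) (h : D a ≤ D b) :
    D (a + c) ≤ D (b + c) := by
  rw [add_comm a c, add_comm b c]; exact D_add_le_add_left c h

lemma D_add_lt_add_left {a b : Fin m →₀ ℕ} (c : Fin m →₀ ℕ) (h : D a < D b) :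
    D (c + a) < D (c + b) := D_add_lt_add_iff.2 h

lemma D_mono {a b : Fin m →₀ ℕ} (h : a ≤ b) : D a ≤ D b := by
  rcases eq_or_lt_of_le (deg1_mono h) with h1 | h1
  · have : a = b := by
      ext k
      by_contra hk
      have hlt : a k < b k := lt_of_le_of_ne (h k) hk
      have : deg1 a < deg1 b := by
        rw [deg1_eq_sum, deg1_eq_sum]
        exact Finset.sum_lt_sum (fun i _ => h i) ⟨k, Finset.mem_univ k, hlt⟩
      omega
    exact le_of_eq (by rw [this])
  · exact D_le_iff.2 (Or.inl h1)

lemma D_zero_le (a : Fin m →₀ ℕ) : D 0 ≤ D a := D_mono zero_le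



variable {m : ℕ} {K : Type} [Field K]

abbrev Poly (m : ℕ) (K : Type) [Field K] := MvPolynomial (Fin m) K

lemma exists_lmo (p : Poly m K) : ∃ a : Fin m →₀ ℕ,
    (p ≠ 0 → a ∈ p.support) ∧ (∀ b ∈ p.support, D b ≤ D a) ∧ (p = 0 → a = 0) := by
  by_cases hp : p = 0
  · exact ⟨0, fun h => absurd hp h, fun b hb => by simp [hp] at hb, fun _ => rfl⟩
  · obtain ⟨a, ha, hmax⟩ := Finset.exists_max_image p.support D
      (by rwa [Finset.nonempty_iff_ne_empty, Ne, MvPolynomial.support_eq_empty])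
    exact ⟨a, fun _ => ha, hmax, fun h => absurd h hp⟩

/-- leading exponent w.r.t. deg-lex; junk value 0 for the zero polynomial -/
def lmo (p : Poly m K) : Fin m →₀ ℕ := (exists_lmo p).choose

lemma lmo_zero : lmo (0 : Poly m K) = 0 := (exists_lmo (0 : Poly m K)).choose_spec.2.2 rfl

lemma lmo_mem {p : Poly m K} (hp : p ≠ 0) : lmo p ∈ p.support :=
  (exists_lmo p).choose_spec.1 hp

lemma le_D_lmo {p : Poly m K} {b : Fin m →₀ ℕ} (hb : b ∈ p.support) : D b ≤ D (lmo p) :=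
  (exists_lmo p).choose_spec.2.1 b hb

def lc (p : Poly m K) : K := coeff (lmo p) p

lemma lc_ne_zero {p : Poly m K} (hp : p ≠ 0) : lc p ≠ 0 :=
  MvPolynomial.mem_support_iff.1 (lmo_mem hp)

lemma coeff_eq_zero_of_D_lt {p : Poly m K} {b : Fin m →₀ ℕ} (h : D (lmo p) < D b) :
    coeff b p = 0 := by
  by_contra hc
  exact absurd (le_D_lmo (MvPolynomial.mem_support_iff.2 hc)) (not_le_of_gt h)

lemma deg1_lmo (p : Poly m K) : deg1 (lmo p) = p.totalDegree := by
  by_cases hp : p = 0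
  · simp [hp, lmo_zero, deg1]
  · apply le_antisymm
    · exact MvPolynomial.le_totalDegree (lmo_mem hp)
    · apply Finset.sup_le
      intro b hb
      exact deg1_le_of_D_le (le_D_lmo hb)

/-- `bnd p γ` : every monomial of `p` is `≼ γ` in deg-lex. -/
def bnd (p : Poly m K) (γ : Fin m →₀ ℕ) : Prop := ∀ b ∈ p.support, D b ≤ D γ

lemma bnd_self (p : Poly m K) : bnd p (lmo p) := fun _ hb => le_D_lmo hb

lemma bnd_zero (γ : Fin m →₀ ℕ) : bnd (0 : Poly m K) γ := by intro b hb; simp at hb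

lemma bnd_mono {p : Poly m K} {γ δ : Fin m →₀ ℕ} (h : bnd p γ) (hγ : D γ ≤ D δ) : bnd p δ :=
  fun b hb => (h b hb).trans hγ

lemma D_lmo_le_of_bnd {p : Poly m K} {γ : Fin m →₀ ℕ} (hp : p ≠ 0) (h : bnd p γ) :
    D (lmo p) ≤ D γ := h _ (lmo_mem hp)

lemma totalDegree_le_of_bnd {p : Poly m K} {γ : Fin m →₀ ℕ} (h : bnd p γ) :
    p.totalDegree ≤ deg1 γ := by
  apply Finset.sup_le
  intro b hb
  exact deg1_le_of_D_le (h b hb)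

lemma bnd_add {p q : Poly m K} {γ : Fin m →₀ ℕ} (hp : bnd p γ) (hq : bnd q γ) :
    bnd (p + q) γ := by
  intro b hb
  rcases Finset.mem_union.1 (MvPolynomial.support_add hb) with h | h
  · exact hp b h
  · exact hq b h

lemma bnd_neg {p : Poly m K} {γ : Fin m →₀ ℕ} (hp : bnd p γ) : bnd (-p) γ := by
  intro b hb
  exact hp b (by simpa using hb)

lemma bnd_sub {p q : Poly m K} {γ : Fin m →₀ ℕ} (hp : bnd p γ) (hq : bnd q γ) :
    bnd (p - q) γ := by
  rw [sub_eq_add_neg]; exact bnd_add hp (bnd_neg hq)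

lemma bnd_monomial {γ a : Fin m →₀ ℕ} (c : K) (h : D a ≤ D γ) :
    bnd (monomial a c : Poly m K) γ := by
  intro b hb
  have := MvPolynomial.support_monomial_subset hb
  simp only [Finset.mem_singleton] at this
  subst this; exact h

lemma bnd_mul {p q : Poly m K} {γ δ : Fin m →₀ ℕ} (hp : bnd p γ) (hq : bnd q δ) :
    bnd (p * q) (γ + δ) := by
  classical
  intro b hb
  have := MvPolynomial.support_mul p q hb
  rcases Finset.mem_add.1 this with ⟨x, hx, y, hy, rfl⟩
  exact (D_add_le_add_left x (hq y hy)).trans (D_add_le_add_right δ (hp x hx))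

lemma bnd_sum {ι : Type*} {s : Finset ι} {f : ι → Poly m K} {γ : Fin m →₀ ℕ}
    (h : ∀ i ∈ s, bnd (f i) γ) : bnd (∑ i ∈ s, f i) γ := by
  classical
  induction s using Finset.induction with
  | empty => simpa using bnd_zero γ
  | insert x s hx ih =>
    rw [Finset.sum_insert hx]
    exact bnd_add (h _ (Finset.mem_insert_self _ _)) (ih fun i hi => h i (Finset.mem_insert_of_mem hi))

lemma lmo_eq_of_bnd {p : Poly m K} {γ : Fin m →₀ ℕ} (h : bnd p γ) (hc : coeff γ p ≠ 0) :
    lmo p = γ := by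
  have hp : p ≠ 0 := by rintro rfl; simp at hc
  exact D_inj (le_antisymm (D_lmo_le_of_bnd hp h) (le_D_lmo (MvPolynomial.mem_support_iff.2 hc)))


lemma tsub_add_lmo {a b : Fin m →₀ ℕ} (h : a ≤ b) : b - a + a = b := tsub_add_cancel_of_le h

lemma red_step {p w : Poly m K} (hp : p ≠ 0) (hw : w ≠ 0) (hle : lmo w ≤ lmo p) :
    ∀ b ∈ (p - monomial (lmo p - lmo w) (lc p / lc w) * w).support, D b < D (lmo p) := by
  have hcan : lmo p - lmo w + lmo w = lmo p := tsub_add_lmo hle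
  have hbnd : bnd (p - monomial (lmo p - lmo w) (lc p / lc w) * w) (lmo p) := by
    apply bnd_sub (bnd_self p)
    have := bnd_mul (bnd_monomial (γ := lmo p - lmo w) (lc p / lc w) le_rfl) (bnd_self w)
    rwa [hcan] at this
  have h2 : coeff (lmo p) (monomial (lmo p - lmo w) (lc p / lc w) * w) = lc p := by
    have h3 := MvPolynomial.coeff_monomial_mul (lmo w) (lmo p - lmo w) (lc p / lc w) w
    rw [hcan] at h3
    rw [h3]
    exact div_mul_cancel₀ _ (lc_ne_zero hw)
  have hco : coeff (lmo p) (p - monomial (lmo p - lmo w) (lc p / lc w) * w) = 0 := by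
    rw [MvPolynomial.coeff_sub, h2]; exact sub_self (lc p)
  intro b hb
  rcases lt_or_eq_of_le (hbnd b hb) with h | h
  · exact h
  · exfalso
    rw [D_inj h] at hb
    exact MvPolynomial.mem_support_iff.1 hb hco

lemma division {N : ℕ} (G : Fin N → Poly m K) (p : Poly m K) :
    ∃ (q : Fin N → Poly m K) (r : Poly m K),
      p = ∑ w, q w * G w + r ∧
      (∀ w, ∀ β ∈ (q w).support, D (β + lmo (G w)) ≤ D (lmo p)) ∧
      (∀ w, G w = 0 → q w = 0) ∧
      bnd r (lmo p) ∧
      (r ≠ 0 → ∀ w, G w ≠ 0 → ¬ lmo (G w) ≤ lmo r) := by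
  classical
  have wfD : WellFounded (fun a b : Poly m K => D (lmo a) < D (lmo b)) :=
    InvImage.wf _ (wellFounded_lt)
  induction p using WellFounded.induction wfD with
  | _ p IH =>
  by_cases hp0 : p = 0
  · refine ⟨0, 0, by simp [hp0], by simp, by simp, bnd_zero _, by simp⟩
  by_cases hred : ∃ w, G w ≠ 0 ∧ lmo (G w) ≤ lmo p
  · obtain ⟨w0, hw0, hle⟩ := hred
    set c : K := lc p / lc (G w0) with hc
    set δ : Fin m →₀ ℕ := lmo p - lmo (G w0) with hδ
    set p' : Poly m K := p - monomial δ c * G w0 with hp'def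
    have hstrict : ∀ b ∈ p'.support, D b < D (lmo p) := red_step hp0 hw0 hle
    have hpsum : p = p' + monomial δ c * G w0 := by rw [hp'def]; ring
    have hδcan : δ + lmo (G w0) = lmo p := tsub_add_lmo hle
    have hq0 : ∀ (q0 : Fin N → Poly m K), (∀ w, w ≠ w0 → q0 w = 0) → q0 w0 = monomial δ c →
        ∑ w, q0 w * G w = monomial δ c * G w0 := by
      intro q0 hz he
      rw [Finset.sum_eq_single_of_mem w0 (Finset.mem_univ w0)]
      · rw [he]
      · intro b _ hb
        rw [hz b hb, zero_mul]
    by_cases hp' : p' = 0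
    · set q0 : Fin N → Poly m K := fun w => if w = w0 then monomial δ c else 0 with hq0def
      have hq0w : ∀ w, q0 w = if w = w0 then monomial δ c else 0 := fun w => rfl
      refine ⟨q0, 0, ?_, ?_, ?_, bnd_zero _, by simp⟩
      · rw [hq0 q0 (fun w hw => by rw [hq0w, if_neg hw]) (by rw [hq0w, if_pos rfl]), add_zero]
        rw [hpsum, hp', zero_add]
      · intro w β hβ
        rw [hq0w] at hβ
        by_cases hw : w = w0
        · rw [if_pos hw] at hβ
          have := MvPolynomial.support_monomial_subset hβ
          simp only [Finset.mem_singleton] at this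
          subst this; subst hw
          rw [hδcan]
        · rw [if_neg hw] at hβ; simp at hβ
      · intro w hw
        rw [hq0w]
        by_cases hww : w = w0
        · subst hww; exact absurd hw hw0
        · rw [if_neg hww]
    · have hlt : D (lmo p') < D (lmo p) := hstrict _ (lmo_mem hp')
      obtain ⟨q', r, hsum, hq', hqz, hbr, hirr⟩ := IH p' hlt
      set q0 : Fin N → Poly m K := fun w => if w = w0 then monomial δ c else 0 with hq0def
      have hq0w : ∀ w, q0 w = if w = w0 then monomial δ c else 0 := fun w => rfl
      set qq : Fin N → Poly m K := fun w => q' w + q0 w with hqqdef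
      have hqqw : ∀ w, qq w = q' w + q0 w := fun w => rfl
      refine ⟨qq, r, ?_, ?_, ?_, ?_, ?_⟩
      · have hsplit : ∑ w, qq w * G w = (∑ w, q' w * G w) + ∑ w, q0 w * G w := by
          rw [← Finset.sum_add_distrib]
          apply Finset.sum_congr rfl
          intro w _
          rw [hqqw, add_mul]
        rw [hsplit, hq0 q0 (fun w hw => by rw [hq0w, if_neg hw]) (by rw [hq0w, if_pos rfl])]
        rw [hpsum]
        conv_lhs => rw [hsum]
        ring
      · intro w β hβ
        rw [hqqw] at hβ
        rcases Finset.mem_union.1 (MvPolynomial.support_add hβ) with h | h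
        · exact (hq' w β h).trans hlt.le
        · rw [hq0w] at h
          by_cases hw : w = w0
          · rw [if_pos hw] at h
            have := MvPolynomial.support_monomial_subset h
            simp only [Finset.mem_singleton] at this
            subst this; subst hw
            rw [hδcan]
          · rw [if_neg hw] at h; simp at h
      · intro w hw
        rw [hqqw, hqz w hw, hq0w]
        by_cases hww : w = w0
        · subst hww; exact absurd hw hw0
        · rw [if_neg hww, zero_add]
      · exact bnd_mono hbr hlt.le
      · exact hirr
  · push_neg at hred
    refine ⟨0, p, by simp, by simp, by simp, bnd_self p, fun _ => hred⟩

variable {N : ℕ}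

/-- S-polynomial (cross-multiplied to avoid division) -/
def spair (G : Fin N → Poly m K) (a b : Fin N) : Poly m K :=
  monomial (lmo (G a) ⊔ lmo (G b) - lmo (G a)) (lc (G b)) * G a
  - monomial (lmo (G a) ⊔ lmo (G b) - lmo (G b)) (lc (G a)) * G b

lemma spair_supp_lt (G : Fin N → Poly m K) (a b : Fin N) :
    ∀ β ∈ (spair G a b).support, D β < D (lmo (G a) ⊔ lmo (G b)) := by
  set u := lmo (G a) ⊔ lmo (G b) with hu
  have hca : u - lmo (G a) + lmo (G a) = u := tsub_add_lmo le_sup_left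
  have hcb : u - lmo (G b) + lmo (G b) = u := tsub_add_lmo le_sup_right
  have hbnd : bnd (spair G a b) u := by
    apply bnd_sub
    · have := bnd_mul (bnd_monomial (γ := u - lmo (G a)) (lc (G b)) le_rfl) (bnd_self (G a))
      rwa [hca] at this
    · have := bnd_mul (bnd_monomial (γ := u - lmo (G b)) (lc (G a)) le_rfl) (bnd_self (G b))
      rwa [hcb] at this
  have hco : coeff u (spair G a b) = 0 := by
    rw [spair, MvPolynomial.coeff_sub]
    have h1 := MvPolynomial.coeff_monomial_mul (lmo (G a)) (u - lmo (G a)) (lc (G b)) (G a)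
    have h2 := MvPolynomial.coeff_monomial_mul (lmo (G b)) (u - lmo (G b)) (lc (G a)) (G b)
    rw [hca] at h1
    rw [hcb] at h2
    rw [h1, h2]
    ring_nf
    rw [mul_comm]
    exact sub_self _
  intro β hβ
  rcases lt_or_eq_of_le (hbnd β hβ) with h | h
  · exact h
  · exact absurd hco (by rw [← D_inj h]; exact MvPolynomial.mem_support_iff.1 hβ)

/-- value of an "entry" `(c, α, w)` : the polynomial `c·x^α·G w` -/
def ev (G : Fin N → Poly m K) (l : K × (Fin m →₀ ℕ) × Fin N) : Poly m K :=
  monomial l.2.1 l.1 * G l.2.2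

/-- level of an entry -/
def lv (G : Fin N → Poly m K) (l : K × (Fin m →₀ ℕ) × Fin N) : Fin m →₀ ℕ :=
  l.2.1 + lmo (G l.2.2)

lemma bnd_ev (G : Fin N → Poly m K) (l : K × (Fin m →₀ ℕ) × Fin N) :
    bnd (ev G l) (lv G l) :=
  bnd_mul (bnd_monomial _ le_rfl) (bnd_self _)

lemma coeff_lv_ev (G : Fin N → Poly m K) (l : K × (Fin m →₀ ℕ) × Fin N) :
    coeff (lv G l) (ev G l) = l.1 * lc (G l.2.2) :=
  MvPolynomial.coeff_monomial_mul _ _ _ _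

lemma coeff_ev_eq_zero (G : Fin N → Poly m K) (l : K × (Fin m →₀ ℕ) × Fin N)
    {γ : Fin m →₀ ℕ} (hne : lv G l ≠ γ) (hle : D (lv G l) ≤ D γ) :
    coeff γ (ev G l) = 0 := by
  by_contra h
  have h1 : D γ ≤ D (lv G l) := bnd_ev G l γ (MvPolynomial.mem_support_iff.2 h)
  exact hne (D_inj (le_antisymm hle h1))

lemma coeff_msum (γ : Fin m →₀ ℕ) (L : Multiset (Poly m K)) :
    coeff γ L.sum = (L.map fun p => coeff γ p).sum := by
  induction L using Multiset.induction with
  | empty => simp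
  | cons a s ih => simp [MvPolynomial.coeff_add, ih]

lemma bnd_msum {γ : Fin m →₀ ℕ} {L : Multiset (Poly m K)}
    (h : ∀ p ∈ L, bnd p γ) : bnd L.sum γ := by
  induction L using Multiset.induction with
  | empty => simpa using bnd_zero γ
  | cons a s ih =>
    rw [Multiset.sum_cons]
    exact bnd_add (h a (Multiset.mem_cons_self a s))
      (ih fun p hp => h p (Multiset.mem_cons_of_mem hp))

lemma criterion (G : Fin N → Poly m K)
    (hS : ∀ a b : Fin N, G a ≠ 0 → G b ≠ 0 → ∃ q : Fin N → Poly m K,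
      spair G a b = ∑ w, q w * G w ∧
      (∀ w, ∀ β ∈ (q w).support, D (β + lmo (G w)) < D (lmo (G a) ⊔ lmo (G b))) ∧
      (∀ w, G w = 0 → q w = 0)) :
    ∀ (p : Poly m K), p ≠ 0 →
      ∀ L : Multiset (K × (Fin m →₀ ℕ) × Fin N),
        (∀ l ∈ L, l.1 ≠ 0 ∧ G l.2.2 ≠ 0) →
        (L.map (ev G)).sum = p →
        ∃ w, G w ≠ 0 ∧ lmo (G w) ≤ lmo p := by
  classical
  have wfE : WellFounded (fun a b : Fin m →₀ ℕ => D a < D b) :=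
    InvImage.wf _ (wellFounded_lt)
  suffices main : ∀ γ : Fin m →₀ ℕ, ∀ n : ℕ, ∀ p : Poly m K, p ≠ 0 →
      ∀ L : Multiset (K × (Fin m →₀ ℕ) × Fin N),
        (∀ l ∈ L, l.1 ≠ 0 ∧ G l.2.2 ≠ 0) →
        (L.map (ev G)).sum = p →
        (∀ l ∈ L, D (lv G l) ≤ D γ) →
        Multiset.countP (fun l => lv G l = γ) L ≤ n →
        ∃ w, G w ≠ 0 ∧ lmo (G w) ≤ lmo p by
    intro p hp L hval hsum
    have hL0 : L ≠ 0 := by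
      rintro rfl
      exact hp (by simpa using hsum.symm)
    obtain ⟨l0, hl0⟩ := Multiset.exists_mem_of_ne_zero hL0
    have hTne : (L.map (lv G)).toFinset.Nonempty :=
      ⟨lv G l0, Multiset.mem_toFinset.2 (Multiset.mem_map_of_mem _ hl0)⟩
    obtain ⟨γ, hγT, hγmax⟩ := Finset.exists_max_image (L.map (lv G)).toFinset D hTne
    refine main γ (Multiset.card L) p hp L hval hsum ?_ (Multiset.countP_le_card _ _)
    intro l hl
    exact hγmax _ (Multiset.mem_toFinset.2 (Multiset.mem_map_of_mem _ hl))
  intro γ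
  induction γ using WellFounded.induction wfE with
  | _ γ IHγ =>
  intro n
  induction n with
  | zero =>
    intro p hp L hval hsum hlev hcnt
    have hnoγ : ∀ l ∈ L, lv G l ≠ γ := by
      rw [Nat.le_zero, Multiset.countP_eq_zero] at hcnt
      exact hcnt
    have hL0 : L ≠ 0 := by
      rintro rfl
      exact hp (by simpa using hsum.symm)
    obtain ⟨l0, hl0⟩ := Multiset.exists_mem_of_ne_zero hL0
    have hTne : (L.map (lv G)).toFinset.Nonempty :=
      ⟨lv G l0, Multiset.mem_toFinset.2 (Multiset.mem_map_of_mem _ hl0)⟩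
    obtain ⟨γ', hγ'T, hγ'max⟩ := Finset.exists_max_image (L.map (lv G)).toFinset D hTne
    obtain ⟨l1, hl1, hl1e⟩ := Multiset.mem_map.1 (Multiset.mem_toFinset.1 hγ'T)
    have hγ'lt : D γ' < D γ := by
      rw [← hl1e]
      exact lt_of_le_of_ne (hlev l1 hl1) (fun h => hnoγ l1 hl1 (D_inj h))
    refine IHγ γ' hγ'lt (Multiset.card L) p hp L hval hsum ?_ (Multiset.countP_le_card _ _)
    intro l hl
    exact hγ'max _ (Multiset.mem_toFinset.2 (Multiset.mem_map_of_mem _ hl))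
  | succ n IHn =>
    intro p hp L hval hsum hlev hcnt
    by_cases hc' : Multiset.countP (fun l => lv G l = γ) L ≤ n
    · exact IHn p hp L hval hsum hlev hc'
    have hcount : Multiset.countP (fun l => lv G l = γ) L = n + 1 := le_antisymm hcnt (not_le.1 hc')
    have hex : ∃ e ∈ L, lv G e = γ := by
      rw [← Multiset.countP_pos]
      omega
    by_cases hlmp : lmo p = γ
    · obtain ⟨e, heL, helv⟩ := hex
      refine ⟨e.2.2, (hval e heL).2, ?_⟩
      rw [hlmp, ← helv, lv]
      exact le_add_self
    · -- coeff γ p = 0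
      have hbnd : bnd p γ := by
        rw [← hsum]
        apply bnd_msum
        intro pp hpp
        obtain ⟨l, hl, rfl⟩ := Multiset.mem_map.1 hpp
        exact bnd_mono (bnd_ev G l) (hlev l hl)
      have hDlt : D (lmo p) < D γ :=
        lt_of_le_of_ne (D_lmo_le_of_bnd hp hbnd) (fun h => hlmp (D_inj h))
      have hcoeff0 : coeff γ p = 0 := coeff_eq_zero_of_D_lt hDlt
      obtain ⟨e1, he1L, he1γ⟩ := hex
      set L1 := L.erase e1 with hL1
      have hLsplit : L = e1 ::ₘ L1 := (Multiset.cons_erase he1L).symm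
      have hcnt1 : Multiset.countP (fun l => lv G l = γ) L1 = n := by
        have := hcount
        rw [hLsplit, Multiset.countP_cons_of_pos (p := fun l => lv G l = γ) _ he1γ] at this
        omega
      by_cases hex2 : ∃ e2 ∈ L1, lv G e2 = γ
      · -- two entries at the top level: rewrite via an S-polynomial
        obtain ⟨e2, he2L1, he2γ⟩ := hex2
        set L2 := L1.erase e2 with hL2
        have hL1split : L1 = e2 ::ₘ L2 := (Multiset.cons_erase he2L1).symm
        have hmemL : ∀ l ∈ L2, l ∈ L := by
          intro l hl
          rw [hLsplit, hL1split]
          exact Multiset.mem_cons_of_mem (Multiset.mem_cons_of_mem hl)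
        obtain ⟨c1, α1, a⟩ := e1
        obtain ⟨c2, α2, b⟩ := e2
        have hc1 : c1 ≠ 0 := (hval _ he1L).1
        have ha : G a ≠ 0 := (hval _ he1L).2
        have he2L : ((c2, α2, b) : K × (Fin m →₀ ℕ) × Fin N) ∈ L := by
          rw [hLsplit]; exact Multiset.mem_cons_of_mem he2L1
        have hc2 : c2 ≠ 0 := (hval _ he2L).1
        have hb : G b ≠ 0 := (hval _ he2L).2
        have hα1 : α1 + lmo (G a) = γ := he1γ
        have hα2 : α2 + lmo (G b) = γ := he2γ
        set u := lmo (G a) ⊔ lmo (G b) with hudef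
        have hula : lmo (G a) ≤ u := le_sup_left
        have hulb : lmo (G b) ≤ u := le_sup_right
        have hu : u ≤ γ := sup_le (le_of_add_le_right hα1.le) (le_of_add_le_right hα2.le)
        have hucan : γ - u + u = γ := tsub_add_lmo hu
        obtain ⟨q, hqsum, hqlt, hqz⟩ := hS a b ha hb
        set c' : K := c1 / lc (G b) with hc'def
        have hc'ne : c' ≠ 0 := div_ne_zero hc1 (lc_ne_zero hb)
        set cm : K := c2 + c1 * lc (G a) / lc (G b) with hcmdef
        -- the key algebraic identity
        have hα1' : α1 = γ - lmo (G a) := eq_tsub_of_add_eq hα1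
        have hα2' : α2 = γ - lmo (G b) := eq_tsub_of_add_eq hα2
        have htsa : γ - u + (u - lmo (G a)) = γ - lmo (G a) := tsub_add_tsub_cancel hu hula
        have htsb : γ - u + (u - lmo (G b)) = γ - lmo (G b) := tsub_add_tsub_cancel hu hulb
        have hid : ev G (c1, α1, a) + ev G (c2, α2, b)
            = monomial (γ - u) c' * spair G a b + monomial α2 cm * G b := by
          rw [spair, ev, ev]
          simp only [mul_sub, ← mul_assoc, MvPolynomial.monomial_mul]
          rw [htsa, htsb, ← hα1', ← hα2']
          have h1 : c' * lc (G b) = c1 := div_mul_cancel₀ _ (lc_ne_zero hb)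
          have h2 : c' * lc (G a) = c1 * lc (G a) / lc (G b) := div_mul_eq_mul_div _ _ _
          rw [h1, h2, hcmdef, map_add, add_mul]
          ring
        -- entries for the S-polynomial expansion
        set Q : Multiset (K × (Fin m →₀ ℕ) × Fin N) :=
          (Finset.univ.val : Multiset (Fin N)).bind
            (fun w => ((q w).support.val).map (fun β => (c' * coeff β (q w), (γ - u) + β, w)))
          with hQdef
        have hQmem : ∀ l ∈ Q, ∃ w, ∃ β ∈ (q w).support, l = (c' * coeff β (q w), (γ - u) + β, w) := by
          intro l hl
          rw [hQdef] at hl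
          obtain ⟨w, -, hw⟩ := Multiset.mem_bind.1 hl
          obtain ⟨β, hβ, rfl⟩ := Multiset.mem_map.1 hw
          exact ⟨w, β, hβ, rfl⟩
        have hQval : ∀ l ∈ Q, l.1 ≠ 0 ∧ G l.2.2 ≠ 0 := by
          intro l hl
          obtain ⟨w, β, hβ, rfl⟩ := hQmem l hl
          have hqw : q w ≠ 0 := by
            intro h0
            rw [h0] at hβ
            simp at hβ
          have hGw : G w ≠ 0 := fun h0 => hqw (hqz w h0)
          exact ⟨mul_ne_zero hc'ne (MvPolynomial.mem_support_iff.1 hβ), hGw⟩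
        have hQlev : ∀ l ∈ Q, D (lv G l) < D γ := by
          intro l hl
          obtain ⟨w, β, hβ, rfl⟩ := hQmem l hl
          have : D (γ - u + (β + lmo (G w))) < D (γ - u + u) := D_add_lt_add_left _ (hqlt w β hβ)
          rw [hucan] at this
          rw [lv]
          simpa [add_assoc] using this
        have fs : ∀ {ι : Type} (s : Finset ι) (ff : ι → Poly m K),
            ∑ x ∈ s, ff x = (s.val.map ff).sum := fun s ff => rfl
        have hQsum : (Q.map (ev G)).sum = monomial (γ - u) c' * spair G a b := by
          have h1 : (Q.map (ev G)).sum
              = ∑ w, (((q w).support.val).map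
                  (fun β => ev G (c' * coeff β (q w), (γ - u) + β, w))).sum := by
            rw [hQdef, Multiset.map_bind, Multiset.sum_bind, fs Finset.univ]
            congr 1
            apply Multiset.map_congr rfl
            intro w _
            rw [Multiset.map_map]
            rfl
          have h2 : ∀ w : Fin N, (((q w).support.val).map
                (fun β => ev G (c' * coeff β (q w), (γ - u) + β, w))).sum
              = monomial (γ - u) c' * (q w * G w) := by
            intro w
            rw [← fs ((q w).support)]
            have : monomial (γ - u) c' * (q w * G w)
                = ∑ β ∈ (q w).support, monomial (γ - u) c' * (monomial β (coeff β (q w)) * G w) := by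
              conv_lhs => rw [(q w).as_sum]
              rw [Finset.sum_mul, Finset.mul_sum]
            rw [this]
            apply Finset.sum_congr rfl
            intro β _
            rw [ev, ← mul_assoc, MvPolynomial.monomial_mul]
          rw [h1]
          have h3 : ∀ w ∈ Finset.univ, (((q w).support.val).map
                (fun β => ev G (c' * coeff β (q w), (γ - u) + β, w))).sum
              = monomial (γ - u) c' * (q w * G w) := fun w _ => h2 w
          rw [Finset.sum_congr rfl h3, ← Finset.mul_sum, ← hqsum]
        -- the merged middle entry
        set E2 : Multiset (K × (Fin m →₀ ℕ) × Fin N) :=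
          if cm = 0 then 0 else {(cm, α2, b)} with hE2def
        have hE2sum : (E2.map (ev G)).sum = monomial α2 cm * G b := by
          by_cases hcm : cm = 0
          · rw [hE2def, if_pos hcm, hcm]
            simp
          · rw [hE2def, if_neg hcm]
            simp [ev]
        have hE2val : ∀ l ∈ E2, l.1 ≠ 0 ∧ G l.2.2 ≠ 0 := by
          intro l hl
          by_cases hcm : cm = 0
          · rw [hE2def, if_pos hcm] at hl; simp at hl
          · rw [hE2def, if_neg hcm, Multiset.mem_singleton] at hl
            subst hl
            exact ⟨hcm, hb⟩
        have hE2lev : ∀ l ∈ E2, lv G l = γ := by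
          intro l hl
          by_cases hcm : cm = 0
          · rw [hE2def, if_pos hcm] at hl; simp at hl
          · rw [hE2def, if_neg hcm, Multiset.mem_singleton] at hl
            subst hl
            exact hα2
        have hE2cnt : Multiset.countP (fun l => lv G l = γ) E2 ≤ 1 := by
          by_cases hcm : cm = 0
          · rw [hE2def, if_pos hcm]; simp
          · rw [hE2def, if_neg hcm]
            have : ({(cm, α2, b)} : Multiset (K × (Fin m →₀ ℕ) × Fin N))
                = (cm, α2, b) ::ₘ 0 := rfl
            rw [this, Multiset.countP_cons]
            simp [Multiset.countP_zero]
            split <;> omega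
        set X : Multiset (K × (Fin m →₀ ℕ) × Fin N) := Q + E2 + L2 with hXdef
        have hXval : ∀ l ∈ X, l.1 ≠ 0 ∧ G l.2.2 ≠ 0 := by
          intro l hl
          rw [hXdef] at hl
          rcases Multiset.mem_add.1 hl with hl | hl
          · rcases Multiset.mem_add.1 hl with hl | hl
            · exact hQval l hl
            · exact hE2val l hl
          · exact hval l (hmemL l hl)
        have hXsum : (X.map (ev G)).sum = p := by
          rw [hXdef, Multiset.map_add, Multiset.map_add, Multiset.sum_add, Multiset.sum_add]
          rw [hQsum, hE2sum]
          have hpL : p = ev G (c1, α1, a) + (ev G (c2, α2, b) + (L2.map (ev G)).sum) := by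
            rw [← hsum, hLsplit, hL1split, Multiset.map_cons, Multiset.map_cons,
              Multiset.sum_cons, Multiset.sum_cons]
          rw [hpL, ← add_assoc, hid]
        have hXlev : ∀ l ∈ X, D (lv G l) ≤ D γ := by
          intro l hl
          rw [hXdef] at hl
          rcases Multiset.mem_add.1 hl with hl | hl
          · rcases Multiset.mem_add.1 hl with hl | hl
            · exact (hQlev l hl).le
            · rw [hE2lev l hl]
          · exact hlev l (hmemL l hl)
        have hcntL2 : Multiset.countP (fun l => lv G l = γ) L2 + 1 = n := by
          rw [hL1split, Multiset.countP_cons_of_pos (p := fun l => lv G l = γ) _ he2γ] at hcnt1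
          omega
        have hXcnt : Multiset.countP (fun l => lv G l = γ) X ≤ n := by
          rw [hXdef, Multiset.countP_add, Multiset.countP_add]
          have hQcnt : Multiset.countP (fun l => lv G l = γ) Q = 0 := by
            rw [Multiset.countP_eq_zero]
            intro l hl hlγ
            have := hQlev l hl
            rw [hlγ] at this
            exact lt_irrefl _ this
          omega
        exact IHn p hp X hXval hXsum hXlev hXcnt
      · -- a single entry at the top level: contradiction
        exfalso
        have hz : ∀ l ∈ L1, coeff γ (ev G l) = 0 := by
          intro l hl
          have hlL : l ∈ L := by rw [hLsplit]; exact Multiset.mem_cons_of_mem hl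
          exact coeff_ev_eq_zero G l (fun h => hex2 ⟨l, hl, h⟩) (hlev l hlL)
        have : coeff γ p = coeff γ (ev G e1) := by
          rw [← hsum, hLsplit]
          rw [Multiset.map_cons, Multiset.sum_cons, MvPolynomial.coeff_add]
          rw [coeff_msum]
          have hzz : (Multiset.map (fun pp : Poly m K => coeff γ pp) (Multiset.map (ev G) L1)).sum = 0 := by
            apply Multiset.sum_eq_zero
            intro x hx
            obtain ⟨pp, hpp, rfl⟩ := Multiset.mem_map.1 hx
            obtain ⟨l, hl, rfl⟩ := Multiset.mem_map.1 hpp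
            exact hz l hl
          rw [hzz, add_zero]
        rw [hcoeff0, ← he1γ, coeff_lv_ev] at this
        exact (mul_ne_zero (hval _ he1L).1 (lc_ne_zero (hval _ he1L).2)) this.symm

lemma qdeg_of_div {G : Fin N → Poly m K} {p : Poly m K} {q : Fin N → Poly m K}
    (h : ∀ w, ∀ β ∈ (q w).support, D (β + lmo (G w)) ≤ D (lmo p)) :
    ∀ w, (q w).totalDegree ≤ p.totalDegree := by
  intro w
  apply Finset.sup_le
  intro β hβ
  calc deg1 β ≤ deg1 (β + lmo (G w)) := by rw [deg1_add]; exact Nat.le_add_right _ _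
    _ ≤ deg1 (lmo p) := deg1_le_of_D_le (h w β hβ)
    _ = p.totalDegree := deg1_lmo p

lemma span_to_mrep (G : Fin N → Poly m K) (r : Poly m K)
    (hr : r ∈ Ideal.span (Set.range G)) :
    ∃ L : Multiset (K × (Fin m →₀ ℕ) × Fin N),
      (∀ l ∈ L, l.1 ≠ 0 ∧ G l.2.2 ≠ 0) ∧ (L.map (ev G)).sum = r := by
  classical
  obtain ⟨c, hc⟩ := Ideal.mem_span_range_iff_exists_fun.1 hr
  refine ⟨(Finset.univ.val : Multiset (Fin N)).bind
    (fun w => if G w = 0 then 0 else ((c w).support.val).map (fun β => (coeff β (c w), β, w))), ?_, ?_⟩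
  · intro l hl
    obtain ⟨w, -, hw⟩ := Multiset.mem_bind.1 hl
    by_cases hGw : G w = 0
    · rw [if_pos hGw] at hw; simp at hw
    · rw [if_neg hGw] at hw
      obtain ⟨β, hβ, rfl⟩ := Multiset.mem_map.1 hw
      exact ⟨MvPolynomial.mem_support_iff.1 hβ, hGw⟩
  · have fs : ∀ {ι : Type} (s : Finset ι) (ff : ι → Poly m K),
        ∑ x ∈ s, ff x = (s.val.map ff).sum := fun s ff => rfl
    rw [Multiset.map_bind, Multiset.sum_bind]
    rw [← hc, fs Finset.univ]
    congr 1
    apply Multiset.map_congr rfl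
    intro w _
    by_cases hGw : G w = 0
    · rw [if_pos hGw, hGw, mul_zero]
      simp
    · rw [if_neg hGw]
      have : c w * G w = ∑ β ∈ (c w).support, monomial β (coeff β (c w)) * G w := by
        conv_lhs => rw [(c w).as_sum]
        rw [Finset.sum_mul]
      rw [this, fs ((c w).support)]
      simp only [Multiset.map_map]
      rfl

/-- every member of the span has a representation with the Gröbner degree bound -/
lemma member_rep (G : Fin N → Poly m K)
    (hS : ∀ a b : Fin N, G a ≠ 0 → G b ≠ 0 → ∃ q : Fin N → Poly m K,
      spair G a b = ∑ w, q w * G w ∧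
      (∀ w, ∀ β ∈ (q w).support, D (β + lmo (G w)) < D (lmo (G a) ⊔ lmo (G b))) ∧
      (∀ w, G w = 0 → q w = 0))
    (g : Poly m K) (hg : g ∈ Ideal.span (Set.range G)) :
    ∃ q : Fin N → Poly m K, g = ∑ w, q w * G w ∧ ∀ w, (q w).totalDegree ≤ g.totalDegree := by
  obtain ⟨q, r, hsum, hq, hqz, hbr, hirr⟩ := division G g
  have hr0 : r = 0 := by
    by_contra hr
    have hrspan : r ∈ Ideal.span (Set.range G) := by
      have h1 : ∑ w, q w * G w ∈ Ideal.span (Set.range G) :=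
        Ideal.sum_mem _ fun w _ => Ideal.mul_mem_left _ _ (Ideal.subset_span ⟨w, rfl⟩)
      have : r = g - ∑ w, q w * G w := by rw [hsum]; ring
      rw [this]
      exact Ideal.sub_mem _ hg h1
    obtain ⟨L, hLval, hLsum⟩ := span_to_mrep G r hrspan
    obtain ⟨w, hw, hwle⟩ := criterion G hS r hr L hLval hLsum
    exact hirr hr w hw hwle
  refine ⟨q, by rw [hsum, hr0, add_zero], qdeg_of_div hq⟩

variable {s : ℕ}

def Gof (f : Fin s → Poly m K) {t : ℕ} (g : Fin t → Poly m K) : Fin (s+t) → Poly m K :=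
  Fin.append f g

def Hful {t : ℕ} (H : Fin t → Fin s → Poly m K) : Fin (s+t) → Fin s → Poly m K :=
  Fin.append (fun i i' => if i' = i then 1 else 0) H

lemma Gof_castAdd (f : Fin s → Poly m K) {t} (g : Fin t → Poly m K) (i : Fin s) :
    Gof f g (Fin.castAdd t i) = f i := Fin.append_left _ _ _

lemma Gof_natAdd (f : Fin s → Poly m K) {t} (g : Fin t → Poly m K) (j : Fin t) :
    Gof f g (Fin.natAdd s j) = g j := Fin.append_right _ _ _

lemma Hful_castAdd {t} (H : Fin t → Fin s → Poly m K) (i : Fin s) :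
    Hful H (Fin.castAdd t i) = fun i' => if i' = i then 1 else 0 := Fin.append_left _ _ _

lemma Hful_natAdd {t} (H : Fin t → Fin s → Poly m K) (j : Fin t) :
    Hful H (Fin.natAdd s j) = H j := Fin.append_right _ _ _

lemma Gof_eq_sum {f : Fin s → Poly m K} {t} {g : Fin t → Poly m K} {H : Fin t → Fin s → Poly m K}
    (hrep : ∀ j, g j = ∑ i, H j i * f i) (w : Fin (s+t)) :
    Gof f g w = ∑ i, Hful H w i * f i := by
  induction w using Fin.addCases with
  | left i =>
    rw [Gof_castAdd, Hful_castAdd]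
    have : ∀ i' : Fin s, (if i' = i then (1 : Poly m K) else 0) * f i'
        = if i' = i then f i' else 0 := by
      intro i'
      split <;> simp
    rw [Finset.sum_congr rfl (fun i' _ => this i'), Finset.sum_ite_eq' Finset.univ i f,
      if_pos (Finset.mem_univ i)]
  | right j =>
    rw [Gof_natAdd, Hful_natAdd]
    exact hrep j

def IsPB (f : Fin s → Poly m K) (d : ℕ) (t : ℕ) (g : Fin t → Poly m K)
    (H : Fin t → Fin s → Poly m K) : Prop :=
  (∀ j, g j ≠ 0) ∧
  (∀ j, g j = ∑ i, H j i * f i) ∧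
  (∀ j i, (H j i).totalDegree ≤ (2^(j.1+2) - 2) * d) ∧
  (∀ j, (g j).totalDegree ≤ 2^(j.1+1) * d) ∧
  (∀ j : Fin t, (∀ i, f i ≠ 0 → ¬ lmo (f i) ≤ lmo (g j)) ∧
    ∀ j' : Fin t, j'.1 < j.1 → ¬ lmo (g j') ≤ lmo (g j))

lemma pb_zero (f : Fin s → Poly m K) (d : ℕ) :
    IsPB f d 0 (fun j => j.elim0) (fun j => j.elim0) :=
  ⟨fun j => j.elim0, fun j => j.elim0, fun j => j.elim0, fun j => j.elim0, fun j => j.elim0⟩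

lemma Hful_deg {t} {H : Fin t → Fin s → Poly m K} {d : ℕ}
    (hH : ∀ j i, (H j i).totalDegree ≤ (2^(j.1+2) - 2) * d) (w : Fin (s+t)) (i : Fin s) :
    (Hful H w i).totalDegree ≤ (2^(t+1) - 2) * d := by
  induction w using Fin.addCases with
  | left i' =>
    rw [Hful_castAdd]
    show ((if i = i' then (1 : Poly m K) else 0)).totalDegree ≤ _
    split <;> simp
  | right j =>
    rw [Hful_natAdd]
    refine (hH j i).trans (Nat.mul_le_mul_right d (Nat.sub_le_sub_right ?_ 2))
    exact Nat.pow_le_pow_right (by norm_num) (by omega)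

lemma Gof_deg {f : Fin s → Poly m K} {t} {g : Fin t → Poly m K} {d : ℕ}
    (hfd : ∀ i, (f i).totalDegree ≤ d)
    (hgdeg : ∀ j, (g j).totalDegree ≤ 2^(j.1+1) * d) (w : Fin (s+t)) :
    (Gof f g w).totalDegree ≤ 2^t * d := by
  induction w using Fin.addCases with
  | left i =>
    rw [Gof_castAdd]
    refine (hfd i).trans ?_
    calc d = 1 * d := (one_mul d).symm
      _ ≤ 2^t * d := Nat.mul_le_mul_right d (Nat.one_le_two_pow)
  | right j =>
    rw [Gof_natAdd]
    refine (hgdeg j).trans (Nat.mul_le_mul_right d ?_)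
    exact Nat.pow_le_pow_right (by norm_num) (by omega)

lemma spair_deg {N : ℕ} (G : Fin N → Poly m K) (a b : Fin N) :
    (spair G a b).totalDegree ≤ (G a).totalDegree + (G b).totalDegree := by
  have h1 : bnd (spair G a b) (lmo (G a) ⊔ lmo (G b)) :=
    fun β hβ => (spair_supp_lt G a b β hβ).le
  refine (totalDegree_le_of_bnd h1).trans ?_
  have h2 : (lmo (G a) ⊔ lmo (G b)) ≤ lmo (G a) + lmo (G b) := sup_le le_self_add le_add_self
  calc deg1 (lmo (G a) ⊔ lmo (G b)) ≤ deg1 (lmo (G a) + lmo (G b)) := deg1_mono h2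
    _ = (G a).totalDegree + (G b).totalDegree := by rw [deg1_add, deg1_lmo, deg1_lmo]

lemma pb_bound {f : Fin s → Poly m K} {d B₀ : ℕ} (hd : 1 ≤ d)
    (hB : ∀ (u : ℕ) (γ : Fin u → (Fin m → ℕ)),
        (∀ i j : Fin u, i < j → ¬ γ i ≤ γ j) →
        (∀ i : Fin u, (∑ k, γ i k) ≤ 3 ^ (i.1+1) * d) → u ≤ B₀)
    (hfd : ∀ i, (f i).totalDegree ≤ d)
    {i₀ : Fin s} (hi₀ : f i₀ ≠ 0)
    {t : ℕ} {g : Fin t → Poly m K} {H : Fin t → Fin s → Poly m K}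
    (hpb : IsPB f d t g H) : t + 1 ≤ B₀ := by
  obtain ⟨hg0, hrep, hHdeg, hgdeg, hnd⟩ := hpb
  set γ : Fin (t+1) → Fin m → ℕ :=
    fun i => Fin.cases (⇑(lmo (f i₀))) (fun j => ⇑(lmo (g j))) i with hγdef
  have hγ0 : γ 0 = ⇑(lmo (f i₀)) := rfl
  have hγs : ∀ j : Fin t, γ j.succ = ⇑(lmo (g j)) := fun j => by
    rw [hγdef]; exact Fin.cases_succ _
  refine hB (t+1) γ ?_ ?_
  · intro i j hij
    induction j using Fin.cases with
    | zero => exact absurd hij (by simp [Fin.lt_def])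
    | succ j' =>
      induction i using Fin.cases with
      | zero =>
        rw [hγ0, hγs]
        intro hle
        refine (hnd j').1 i₀ hi₀ ?_
        rw [Finsupp.le_def]
        exact hle
      | succ i' =>
        rw [hγs, hγs]
        intro hle
        refine (hnd j').2 i' ?_ ?_
        · have hlt : i'.1 + 1 < j'.1 + 1 := by
            rw [Fin.lt_def, Fin.val_succ, Fin.val_succ] at hij
            exact hij
          omega
        · rw [Finsupp.le_def]
          exact hle
  · intro i
    induction i using Fin.cases with
    | zero =>
      rw [hγ0, ← deg1_eq_sum, deg1_lmo]
      refine (hfd i₀).trans ?_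
      calc d = 1 * d := (one_mul d).symm
        _ ≤ 3^((0:Fin (t+1)).1+1) * d := Nat.mul_le_mul_right d (by norm_num)
    | succ j =>
      rw [hγs, ← deg1_eq_sum, deg1_lmo]
      refine (hgdeg j).trans (Nat.mul_le_mul_right d ?_)
      have h1 : (2:ℕ)^(j.1+1) ≤ 3^(j.1+1) := Nat.pow_le_pow_left (by norm_num) _
      have h2 : (3:ℕ)^(j.1+1) ≤ 3^(j.succ.1+1) := Nat.pow_le_pow_right (by norm_num) (by simp)
      exact h1.trans h2

lemma extend {f : Fin s → Poly m K} {d : ℕ} (hfd : ∀ i, (f i).totalDegree ≤ d)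
    {t : ℕ} {g : Fin t → Poly m K} {H : Fin t → Fin s → Poly m K}
    (hpb : IsPB f d t g H) (a b : Fin (s+t))
    (q : Fin (s+t) → Poly m K) (r : Poly m K)
    (hsum : spair (Gof f g) a b = ∑ w, q w * Gof f g w + r)
    (hqD : ∀ w, ∀ β ∈ (q w).support, D (β + lmo (Gof f g w)) ≤ D (lmo (spair (Gof f g) a b)))
    (hbr : bnd r (lmo (spair (Gof f g) a b)))
    (hr : r ≠ 0)
    (hirr : ∀ w, Gof f g w ≠ 0 → ¬ lmo (Gof f g w) ≤ lmo r) :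
    IsPB f d (t+1) (Fin.snoc g r) (Fin.snoc H (fun i =>
      monomial ((lmo (Gof f g a) ⊔ lmo (Gof f g b)) - lmo (Gof f g a)) (lc (Gof f g b)) * Hful H a i
      - monomial ((lmo (Gof f g a) ⊔ lmo (Gof f g b)) - lmo (Gof f g b)) (lc (Gof f g a)) * Hful H b i
      - ∑ w, q w * Hful H w i)) := by
  obtain ⟨hg0, hrep, hHdeg, hgdeg, hnd⟩ := hpb
  set G : Fin (s+t) → Poly m K := Gof f g with hGdef
  set S : Poly m K := spair G a b with hSdef
  set u : Fin m →₀ ℕ := lmo (G a) ⊔ lmo (G b) with hudef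
  set Rnew : Fin s → Poly m K := fun i =>
      monomial (u - lmo (G a)) (lc (G b)) * Hful H a i
      - monomial (u - lmo (G b)) (lc (G a)) * Hful H b i
      - ∑ w, q w * Hful H w i with hRdef
  have hpow : (1:ℕ) ≤ 2^t := Nat.one_le_two_pow
  have hdegS : S.totalDegree ≤ 2^(t+1) * d := by
    refine (spair_deg G a b).trans ?_
    have h1 := Gof_deg hfd hgdeg a
    have h2 := Gof_deg hfd hgdeg b
    calc (G a).totalDegree + (G b).totalDegree ≤ 2^t * d + 2^t * d := Nat.add_le_add h1 h2
      _ = 2^(t+1) * d := by ring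
  have hdegr : r.totalDegree ≤ 2^(t+1) * d := by
    refine (totalDegree_le_of_bnd hbr).trans ?_
    rw [deg1_lmo]
    exact hdegS
  have hqdeg : ∀ w, (q w).totalDegree ≤ 2^(t+1) * d :=
    fun w => (qdeg_of_div hqD w).trans hdegS
  have hrnew : r = ∑ i, Rnew i * f i := by
    have hGsum : ∀ w, G w = ∑ i, Hful H w i * f i := fun w => by
      rw [hGdef]; exact Gof_eq_sum hrep w
    have hmulsum : ∀ (δ : Fin m →₀ ℕ) (cc : K) (w : Fin (s+t)),
        monomial δ cc * G w = ∑ i, (monomial δ cc * Hful H w i) * f i := by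
      intro δ cc w
      conv_lhs => rw [hGsum w]
      rw [Finset.mul_sum]
      apply Finset.sum_congr rfl
      intro i _
      rw [mul_assoc]
    have hr' : r = S - ∑ w, q w * G w := by rw [hsum]; ring
    have hSeq : S = ∑ i, (monomial (u - lmo (G a)) (lc (G b)) * Hful H a i) * f i
        - ∑ i, (monomial (u - lmo (G b)) (lc (G a)) * Hful H b i) * f i := by
      rw [hSdef, spair, ← hudef, hmulsum, hmulsum]
    have hQeq : ∑ w, q w * G w = ∑ i, (∑ w, q w * Hful H w i) * f i := by
      have h1 : ∀ w, q w * G w = ∑ i, (q w * Hful H w i) * f i := by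
        intro w
        conv_lhs => rw [hGsum w]
        rw [Finset.mul_sum]
        apply Finset.sum_congr rfl
        intro i _
        rw [mul_assoc]
      rw [Finset.sum_congr rfl (fun w _ => h1 w), Finset.sum_comm]
      apply Finset.sum_congr rfl
      intro i _
      rw [Finset.sum_mul]
    rw [hr', hSeq, hQeq, ← Finset.sum_sub_distrib, ← Finset.sum_sub_distrib]
    apply Finset.sum_congr rfl
    intro i _
    rw [hRdef]
    ring
  have hRdeg : ∀ i, (Rnew i).totalDegree ≤ (2^(t+2) - 2) * d := by
    intro i
    have hua : u - lmo (G a) ≤ lmo (G b) := tsub_le_iff_left.2 (sup_le le_self_add le_add_self)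
    have hub : u - lmo (G b) ≤ lmo (G a) := by
      rw [tsub_le_iff_left]
      refine sup_le ?_ ?_
      · exact le_add_self
      · exact le_self_add
    have hdua : deg1 (u - lmo (G a)) ≤ 2^t * d := by
      refine (deg1_mono hua).trans ?_
      rw [deg1_lmo]
      exact Gof_deg hfd hgdeg b
    have hdub : deg1 (u - lmo (G b)) ≤ 2^t * d := by
      refine (deg1_mono hub).trans ?_
      rw [deg1_lmo]
      exact Gof_deg hfd hgdeg a
    have hHd : ∀ w, (Hful H w i).totalDegree ≤ (2^(t+1) - 2) * d := fun w => Hful_deg hHdeg w i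
    have hT1 : (monomial (u - lmo (G a)) (lc (G b)) * Hful H a i).totalDegree
        ≤ 2^t * d + (2^(t+1) - 2) * d := by
      refine (MvPolynomial.totalDegree_mul _ _).trans (Nat.add_le_add ?_ (hHd a))
      exact (MvPolynomial.totalDegree_monomial_le _ _).trans hdua
    have hT2 : (monomial (u - lmo (G b)) (lc (G a)) * Hful H b i).totalDegree
        ≤ 2^t * d + (2^(t+1) - 2) * d := by
      refine (MvPolynomial.totalDegree_mul _ _).trans (Nat.add_le_add ?_ (hHd b))
      exact (MvPolynomial.totalDegree_monomial_le _ _).trans hdub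
    have hT3 : (∑ w, q w * Hful H w i).totalDegree ≤ 2^(t+1) * d + (2^(t+1) - 2) * d := by
      refine (MvPolynomial.totalDegree_finset_sum _ _).trans ?_
      apply Finset.sup_le
      intro w _
      exact (MvPolynomial.totalDegree_mul _ _).trans (Nat.add_le_add (hqdeg w) (hHd w))
    have harith1 : 2^t * d + (2^(t+1) - 2) * d ≤ (2^(t+2) - 2) * d := by
      refine Nat.le_trans (by rw [← Nat.add_mul]) (Nat.mul_le_mul_right d ?_)
      have h4 : (2:ℕ)^(t+1) = 2 * 2^t := by ring
      have h5 : (2:ℕ)^(t+2) = 4 * 2^t := by ring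
      omega
    have harith2 : 2^(t+1) * d + (2^(t+1) - 2) * d ≤ (2^(t+2) - 2) * d := by
      refine Nat.le_trans (by rw [← Nat.add_mul]) (Nat.mul_le_mul_right d ?_)
      have h4 : (2:ℕ)^(t+1) = 2 * 2^t := by ring
      have h5 : (2:ℕ)^(t+2) = 4 * 2^t := by ring
      omega
    rw [hRdef]
    refine (MvPolynomial.totalDegree_sub _ _).trans ?_
    refine max_le ((MvPolynomial.totalDegree_sub _ _).trans (max_le (hT1.trans harith1) (hT2.trans harith1))) ?_
    exact hT3.trans harith2
  refine ⟨?_, ?_, ?_, ?_, ?_⟩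
  · intro j
    induction j using Fin.lastCases with
    | last => rw [Fin.snoc_last]; exact hr
    | cast j' => rw [Fin.snoc_castSucc]; exact hg0 j'
  · intro j
    induction j using Fin.lastCases with
    | last =>
      rw [Fin.snoc_last]
      have : ∀ i, (Fin.snoc (α := fun _ => Fin s → Poly m K) H Rnew (Fin.last t)) i
          = Rnew i := by
        intro i
        rw [Fin.snoc_last]
      rw [hrnew]
      apply Finset.sum_congr rfl
      intro i _
      rw [this i]
    | cast j' =>
      rw [Fin.snoc_castSucc]
      rw [hrep j']
      apply Finset.sum_congr rfl
      intro i _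
      rw [Fin.snoc_castSucc]
  · intro j i
    induction j using Fin.lastCases with
    | last =>
      rw [Fin.snoc_last]
      have : (Fin.last t).1 = t := rfl
      rw [this]
      exact hRdeg i
    | cast j' =>
      rw [Fin.snoc_castSucc]
      have : (Fin.castSucc j').1 = j'.1 := rfl
      rw [this]
      exact hHdeg j' i
  · intro j
    induction j using Fin.lastCases with
    | last =>
      rw [Fin.snoc_last]
      have : (Fin.last t).1 = t := rfl
      rw [this]
      exact hdegr
    | cast j' =>
      rw [Fin.snoc_castSucc]
      have : (Fin.castSucc j').1 = j'.1 := rfl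
      rw [this]
      exact hgdeg j'
  · intro j
    induction j using Fin.lastCases with
    | last =>
      constructor
      · intro i hfi
        rw [Fin.snoc_last]
        have h9 := hirr (Fin.castAdd t i)
        rw [hGdef, Gof_castAdd] at h9
        exact h9 hfi
      · intro j' hj'
        induction j' using Fin.lastCases with
        | last => exfalso; exact absurd hj' (by simp)
        | cast j'' =>
          rw [Fin.snoc_last, Fin.snoc_castSucc]
          have h9 := hirr (Fin.natAdd s j'')
          rw [hGdef, Gof_natAdd] at h9
          exact h9 (hg0 j'')
    | cast j' =>
      constructor
      · intro i hfi
        rw [Fin.snoc_castSucc]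
        exact (hnd j').1 i hfi
      · intro j'' hj''
        induction j'' using Fin.lastCases with
        | last =>
          exfalso
          have h1 : (Fin.last t).1 = t := rfl
          have h2 : (Fin.castSucc j').1 = j'.1 := rfl
          rw [h1, h2] at hj''
          have := j'.2
          omega
        | cast j''' =>
          rw [Fin.snoc_castSucc, Fin.snoc_castSucc]
          refine (hnd j').2 j''' ?_
          have h2 : (Fin.castSucc j''').1 = j'''.1 := rfl
          have h3 : (Fin.castSucc j').1 = j'.1 := rfl
          rw [h2, h3] at hj''
          exact hj''

lemma two_three : ∀ n : ℕ, 1 ≤ n → 2^n ≤ 3^(n-1) + 1 := by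
  intro n
  induction n with
  | zero => omega
  | succ k ih =>
    intro _
    rcases Nat.eq_zero_or_pos k with hk | hk
    · subst hk; norm_num
    · have h1 := ih hk
      have h2 : (1:ℕ) ≤ 3^(k-1) := Nat.one_le_pow _ _ (by norm_num)
      have h3 : (3:ℕ)^k = 3 * 3^(k-1) := by
        rw [← pow_succ']
        congr 1
        omega
      have h4 : (2:ℕ)^(k+1) = 2 * 2^k := by ring
      have h5 : (k+1) - 1 = k := by omega
      rw [h5, h4, h3]
      omega

end Stmt18

/- STATEMENT 18: the effective ideal-membership degree bound
Γ(m,d,e) = (3^{B(m, n ↦ 3ⁿd) − 1} − 1)·d + e, built from any function B with the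
bounding property for antichains in ℕ^m (a purely combinatorial datum), works
uniformly over every field K: for every field K, every g and f₁,...,f_s of degree ≤ d
in K[x₁,...,x_m], g ∈ ⟨f₁,...,f_s⟩ iff g has a representation with cofactor degrees
≤ Γ(m,d,deg g). -/
theorem stmt_18 (m d : ℕ) (hm : 1 ≤ m) (hd : 1 ≤ d)
    (B : ℕ → (ℕ → ℕ) → ℕ)
    -- B has the bounding property for antichains in ℕ^m
    (hB : ∀ h : ℕ → ℕ, (∀ n, 1 ≤ h n) → Monotone h →
      ∀ (u : ℕ) (γ : Fin u → (Fin m → ℕ)),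
        (∀ i j : Fin u, i < j → ¬ γ i ≤ γ j) →
        (∀ i : Fin u, (∑ k, γ i k) ≤ h (i.1 + 1)) →
        u ≤ B m h) :
    ∀ (K : Type) (_ : Field K) (s : ℕ)
      (g : MvPolynomial (Fin m) K) (f : Fin s → MvPolynomial (Fin m) K),
      (∀ i, (f i).totalDegree ≤ d) →
      (g ∈ Ideal.span (Set.range f) ↔
        ∃ h : Fin s → MvPolynomial (Fin m) K,
          g = ∑ i, h i * f i ∧
          ∀ i, (h i).totalDegree ≤
            (3 ^ (B m (fun n => 3 ^ n * d) - 1) - 1) * d + g.totalDegree) := by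
  intro K _K s g f hfd
  classical
  open Stmt18 in
  constructor
  · intro hg
    by_cases hf0 : ∀ i, f i = 0
    · have hg0 : g = 0 := by
        have hle : Ideal.span (Set.range f) ≤ ⊥ := by
          rw [Ideal.span_le]
          rintro x ⟨i, rfl⟩
          simp [hf0 i]
        simpa using hle hg
      exact ⟨0, by simp [hg0], fun i => by simp⟩
    · push_neg at hf0
      obtain ⟨i₀, hi₀⟩ := hf0
      have hBspec : ∀ (u : ℕ) (γ : Fin u → (Fin m → ℕ)),
          (∀ i j : Fin u, i < j → ¬ γ i ≤ γ j) →
          (∀ i : Fin u, (∑ k, γ i k) ≤ 3 ^ (i.1+1) * d) →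
          u ≤ B m (fun n => 3 ^ n * d) := by
        intro u γ h1 h2
        refine hB (fun n => 3 ^ n * d) (fun n => ?_) (fun x y hxy => ?_) u γ h1 h2
        · have h9 : 0 < 3 ^ n * d := by positivity
          exact h9
        · exact Nat.mul_le_mul_right d (Nat.pow_le_pow_right (by norm_num) hxy)
      set P : ℕ → Prop := fun t => ∃ (g' : Fin t → Poly m K) (H' : Fin t → Fin s → Poly m K),
        IsPB f d t g' H' with hPdef
      have hP0 : P 0 := ⟨_, _, pb_zero f d⟩
      have hPbound : ∀ t, P t → t + 1 ≤ B m (fun n => 3 ^ n * d) := by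
        rintro t ⟨g', H', hpb⟩
        exact pb_bound hd hBspec hfd hi₀ hpb
      set t₀ := Nat.findGreatest P (B m (fun n => 3 ^ n * d)) with ht₀def
      have hPt₀ : P t₀ := Nat.findGreatest_spec (Nat.zero_le _) hP0
      have hmax : ¬ P (t₀ + 1) := by
        intro hP1
        have h1 : t₀ + 1 ≤ B m (fun n => 3 ^ n * d) := by
          have := hPbound _ hP1
          omega
        exact Nat.findGreatest_is_greatest (Nat.lt_succ_self t₀) h1 hP1
      obtain ⟨gb, Hb, hpb⟩ := hPt₀
      have hS : ∀ a b : Fin (s + t₀), Gof f gb a ≠ 0 → Gof f gb b ≠ 0 →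
          ∃ q : Fin (s + t₀) → Poly m K,
            spair (Gof f gb) a b = ∑ w, q w * Gof f gb w ∧
            (∀ w, ∀ β ∈ (q w).support,
              D (β + lmo (Gof f gb w)) < D (lmo (Gof f gb a) ⊔ lmo (Gof f gb b))) ∧
            (∀ w, Gof f gb w = 0 → q w = 0) := by
        intro a b ha hb
        by_cases hsp : spair (Gof f gb) a b = 0
        · refine ⟨0, by simp [hsp], ?_, fun w _ => rfl⟩
          intro w β hβ
          simp at hβ
        · obtain ⟨q, r, hsum, hq, hqz, hbr, hirr⟩ := division (Gof f gb) (spair (Gof f gb) a b)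
          have hr0 : r = 0 := by
            by_contra hr
            exact hmax ⟨_, _, extend hfd hpb a b q r hsum hq hbr hr (hirr hr)⟩
          refine ⟨q, by rw [hsum, hr0, add_zero], ?_, hqz⟩
          intro w β hβ
          exact lt_of_le_of_lt (hq w β hβ) (spair_supp_lt (Gof f gb) a b _ (lmo_mem hsp))
      by_cases hg0 : g = 0
      · exact ⟨0, by simp [hg0], fun i => by simp⟩
      · have hspan : g ∈ Ideal.span (Set.range (Gof f gb)) := by
          refine Ideal.span_mono ?_ hg
          rintro x ⟨i, rfl⟩
          exact ⟨Fin.castAdd _ i, Gof_castAdd f gb i⟩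
        obtain ⟨q, hqsum, hqdeg⟩ := member_rep (Gof f gb) hS g hspan
        refine ⟨fun i => ∑ w, q w * Hful Hb w i, ?_, ?_⟩
        · rw [hqsum]
          have h1 : ∀ w, q w * Gof f gb w = ∑ i, (q w * Hful Hb w i) * f i := by
            intro w
            conv_lhs => rw [Gof_eq_sum hpb.2.1 w]
            rw [Finset.mul_sum]
            apply Finset.sum_congr rfl
            intro i _
            rw [mul_assoc]
          rw [Finset.sum_congr rfl (fun w _ => h1 w), Finset.sum_comm]
          apply Finset.sum_congr rfl
          intro i _
          rw [Finset.sum_mul]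
        · intro i
          have ht₀b : t₀ + 1 ≤ B m (fun n => 3 ^ n * d) := hPbound _ ⟨gb, Hb, hpb⟩
          have hdegw : ∀ w, (q w * Hful Hb w i).totalDegree
              ≤ (2^(t₀+1) - 2) * d + g.totalDegree := by
            intro w
            refine (MvPolynomial.totalDegree_mul _ _).trans ?_
            have h2 := Hful_deg hpb.2.2.1 w i
            have h3 := hqdeg w
            omega
          refine (MvPolynomial.totalDegree_finset_sum _ _).trans ?_
          refine (Finset.sup_le fun w _ => hdegw w).trans ?_
          have h23 := two_three (B m (fun n => 3 ^ n * d)) (by omega)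
          have h2mono : (2:ℕ)^(t₀+1) ≤ 2^(B m (fun n => 3 ^ n * d)) :=
            Nat.pow_le_pow_right (by norm_num) ht₀b
          have hfin : (2^(t₀+1) - 2) ≤ 3^(B m (fun n => 3 ^ n * d) - 1) - 1 := by omega
          exact Nat.add_le_add (Nat.mul_le_mul_right d hfin) le_rfl
  · rintro ⟨h, hrep, -⟩
    rw [hrep]
    exact Ideal.sum_mem _ fun i _ => Ideal.mul_mem_left _ _ (Ideal.subset_span ⟨i, rfl⟩)
end
end
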